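/- arXiv:2212.00319 — 6 statements merged into one kernel-verified Lean document; each statement's English description precedes it below -/
import Mathlib

section
/- If (J, u*) is observable with J Hermitian, then the matrices A = [[J, u], [−u*, a]] and J have no common eigenvalues: σ(A) ∩ σ(J) = ∅. -/
open Matrix
open scoped ComplexOrder

/-- Observability of the pair `(J, u*)`. -/
def IsObservable {m : ℕ} (J : Matrix (Fin m) (Fin m) ℂ) (u : Fin m → ℂ) : Prop :=
  ∀ lam : ℂ,
    (Matrix.fromRows (lam • (1 : Matrix (Fin m) (Fin m) ℂ) - J)
      (Matrix.replicateRow Unit (star u))).rank = m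

lemma aux_full_rank_inj {m : ℕ} (B : Matrix (Fin m ⊕ Unit) (Fin m) ℂ)
    (h : B.rank = m) {w : Fin m → ℂ} (hw : B.mulVec w = 0) : w = 0 := by
  have h1 := LinearMap.finrank_range_add_finrank_ker B.mulVecLin
  have h2 : Module.finrank ℂ (Fin m → ℂ) = m := by simp
  rw [h2] at h1
  have hk : Module.finrank ℂ (LinearMap.ker B.mulVecLin) = 0 := by
    have : B.rank = Module.finrank ℂ (LinearMap.range B.mulVecLin) := rfl
    omega
  have hker : LinearMap.ker B.mulVecLin = ⊥ := Submodule.finrank_eq_zero.mp hk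
  have : w ∈ LinearMap.ker B.mulVecLin := by
    simpa [Matrix.mulVecLin_apply] using hw
  simpa [hker] using this

lemma aux_mem_spectrum_iff {n : Type*} [Fintype n] [DecidableEq n]
    (M : Matrix n n ℂ) (lam : ℂ) :
    lam ∈ spectrum ℂ M ↔ ∃ v ≠ 0, M.mulVec v = lam • v := by
  rw [spectrum.mem_iff, Matrix.isUnit_iff_isUnit_det, isUnit_iff_ne_zero, not_ne_iff,
    ← Matrix.exists_mulVec_eq_zero_iff]
  constructor
  · rintro ⟨v, hv, h⟩
    refine ⟨v, hv, ?_⟩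
    have := h
    rw [Matrix.sub_mulVec, Algebra.algebraMap_eq_smul_one, Matrix.smul_mulVec,
      Matrix.one_mulVec, sub_eq_zero] at this
    exact this.symm
  · rintro ⟨v, hv, h⟩
    refine ⟨v, hv, ?_⟩
    rw [Matrix.sub_mulVec, Algebra.algebraMap_eq_smul_one, Matrix.smul_mulVec,
      Matrix.one_mulVec, sub_eq_zero, h]

/-- If `(J, u*)` is observable with `J` Hermitian and `a ∈ ℝ`, then
`A = [[J, u], [-u*, a]]` and `J` have no common eigenvalues. -/
theorem stmt_4 {m : ℕ} (J : Matrix (Fin m) (Fin m) ℂ) (hJ : J.IsHermitian)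
    (u : Fin m → ℂ) (a : ℝ) (hobs : IsObservable J u) :
    let A : Matrix (Fin m ⊕ Unit) (Fin m ⊕ Unit) ℂ :=
      Matrix.fromBlocks J (Matrix.replicateCol Unit u) (-(Matrix.replicateRow Unit (star u)))
        (Matrix.of fun _ _ => (a : ℂ))
    spectrum ℂ A ∩ spectrum ℂ J = ∅ := by
  intro A
  rw [Set.eq_empty_iff_forall_notMem]
  rintro lam ⟨hlamA, hlamJ⟩
  rw [aux_mem_spectrum_iff] at hlamA hlamJ
  obtain ⟨v, hv, hAv⟩ := hlamA
  obtain ⟨w, hw, hJw⟩ := hlamJ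
  -- key consequence of observability at `lam` : kernel of the stacked matrix is trivial
  set B : Matrix (Fin m ⊕ Unit) (Fin m) ℂ :=
    Matrix.fromRows (lam • (1 : Matrix (Fin m) (Fin m) ℂ) - J) (Matrix.replicateRow Unit (star u))
  have hBinj : ∀ {z : Fin m → ℂ}, B.mulVec z = 0 → z = 0 :=
    fun {z} hz => aux_full_rank_inj B (hobs lam) hz
  -- `lam` is real
  have hww : (star w) ⬝ᵥ w ≠ 0 := fun h => hw (dotProduct_star_self_eq_zero.mp h)
  have hS : star ((star w) ⬝ᵥ J.mulVec w) = (star w) ⬝ᵥ J.mulVec w := by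
    rw [← Matrix.star_dotProduct, Matrix.star_mulVec, hJ.eq, Matrix.dotProduct_mulVec]
  rw [hJw] at hS
  have hcw : star ((star w) ⬝ᵥ w) = (star w) ⬝ᵥ w := by
    rw [← Matrix.star_dotProduct]
  rw [dotProduct_smul, smul_eq_mul, star_mul', hcw] at hS
  have hlam_real : star lam = lam := mul_right_cancel₀ hww hS
  -- left eigenvector relation : star w ᵥ* J = lam • star w
  have hleft : (star w) ᵥ* J = lam • star w := by
    have := congrArg star hJw
    rw [Matrix.star_mulVec, hJ.eq] at this
    rw [this]
    ext i
    simp [hlam_real, mul_comm]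
  -- decompose v
  set x : Fin m → ℂ := v ∘ Sum.inl
  set t : ℂ := v (Sum.inr ())
  have hvelim : v = Sum.elim x (fun _ => t) := by
    funext i; cases i with
    | inl i => rfl
    | inr i => cases i; rfl
  rw [Matrix.fromBlocks_mulVec] at hAv
  have htop : J.mulVec x + (Matrix.replicateCol Unit u).mulVec (v ∘ Sum.inr) = lam • x := by
    funext i
    have := congrFun hAv (Sum.inl i)
    simpa [x] using this
  have hbot : (-(Matrix.replicateRow Unit (star u))).mulVec x (())
      + (Matrix.of fun _ _ => (a : ℂ)).mulVec (v ∘ Sum.inr) (()) = lam * t := by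
    have := congrFun hAv (Sum.inr ())
    simpa [t] using this
  have hcolu : (Matrix.replicateCol Unit u).mulVec (v ∘ Sum.inr) = t • u := by
    funext i
    simp [Matrix.mulVec, Matrix.replicateCol, dotProduct, t, mul_comm]
  rw [hcolu] at htop
  -- star u ⬝ᵥ w ≠ 0 by observability
  have huw : (star u) ⬝ᵥ w ≠ 0 := by
    intro h
    apply hw
    apply hBinj
    rw [Matrix.fromRows_mulVec]
    funext i
    cases i with
    | inl i =>
      have : (lam • (1 : Matrix (Fin m) (Fin m) ℂ) - J).mulVec w = 0 := by
        rw [Matrix.sub_mulVec, Matrix.smul_mulVec, Matrix.one_mulVec, hJw, sub_self]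
      simpa using congrFun this i
    | inr i =>
      cases i
      simpa [Matrix.mulVec, Matrix.replicateRow, dotProduct] using h
  -- show t = 0
  have hdot := congrArg (fun y => (star w) ⬝ᵥ y) htop
  simp only [dotProduct_add, dotProduct_smul] at hdot
  rw [Matrix.dotProduct_mulVec, hleft] at hdot
  have hws : (star w) ⬝ᵥ (t • u) = 0 := by
    simp only [dotProduct_smul, smul_dotProduct, smul_eq_mul] at hdot ⊢
    linear_combination hdot
  have hwu : (star w) ⬝ᵥ u ≠ 0 := by
    intro h
    apply huw
    have : star ((star w) ⬝ᵥ u) = (star u) ⬝ᵥ w := by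
      rw [← Matrix.star_dotProduct]
    rw [← this, h, star_zero]
  have ht : t = 0 := by
    rw [dotProduct_smul, smul_eq_mul] at hws
    rcases mul_eq_zero.mp hws with h | h
    · exact h
    · exact absurd h hwu
  -- then x is in the kernel of B
  have hx : x = 0 := by
    apply hBinj
    rw [Matrix.fromRows_mulVec]
    funext i
    cases i with
    | inl i =>
      have hJx : J.mulVec x = lam • x := by
        rw [ht] at htop
        simpa using htop
      have : (lam • (1 : Matrix (Fin m) (Fin m) ℂ) - J).mulVec x = 0 := by
        rw [Matrix.sub_mulVec, Matrix.smul_mulVec, Matrix.one_mulVec, hJx, sub_self]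
      simpa using congrFun this i
    | inr i =>
      cases i
      have h1 : (-(Matrix.replicateRow Unit (star u))).mulVec x (()) = -((star u) ⬝ᵥ x) := by
        simp [Matrix.mulVec, Matrix.replicateRow, dotProduct]
      have h2 : (Matrix.of fun _ _ => (a : ℂ)).mulVec (v ∘ Sum.inr) (()) = a * t := by
        simp [Matrix.mulVec, dotProduct, t]
      rw [h1, h2, ht] at hbot
      have : (star u) ⬝ᵥ x = 0 := by linear_combination -hbot
      simpa [Matrix.mulVec, Matrix.replicateRow, dotProduct] using this
  apply hv
  rw [hvelim, hx, ht]
  funext i; cases i with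
  | inl i => rfl
  | inr i => cases i; rfl
end

section
/- If (J, u*) is observable with J Hermitian and a ∈ ℝ, then the matrix A = [[J, u], [−u*, a]] is nonderogatory: every eigenvalue of A has a one-dimensional eigenspace. -/
open Matrix

/-- If `(J, u*)` is observable with `J` Hermitian and `a ∈ ℝ`, then
`A = [[J, u], [-u*, a]]` is nonderogatory: every eigenvalue of `A` has a
one-dimensional eigenspace. -/
theorem stmt_5 {m : ℕ} (J : Matrix (Fin m) (Fin m) ℂ) (hJ : J.IsHermitian)
    (u : Fin m → ℂ) (a : ℝ) (hobs : IsObservable J u) :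
    let A : Matrix (Fin m ⊕ Unit) (Fin m ⊕ Unit) ℂ :=
      Matrix.fromBlocks J (Matrix.replicateCol Unit u) (-(Matrix.replicateRow Unit (star u)))
        (Matrix.of fun _ _ => (a : ℂ))
    ∀ lam : ℂ, lam ∈ spectrum ℂ A →
      Module.finrank ℂ (Module.End.eigenspace (Matrix.toLin' A) lam) = 1 := by
  intro A lam hlam
  -- the eigenvalue exists
  have heig : Module.End.HasEigenvalue (Matrix.toLin' A) lam := by
    rw [Module.End.hasEigenvalue_iff_mem_spectrum]
    rwa [show Matrix.toLin' A = Matrix.toLinAlgEquiv' A from rfl, AlgEquiv.spectrum_eq]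
  -- observability: mulVec of the observability matrix is injective
  set M : Matrix (Fin m ⊕ Unit) (Fin m) ℂ :=
    Matrix.fromRows (lam • (1 : Matrix (Fin m) (Fin m) ℂ) - J) (Matrix.replicateRow Unit (star u))
  have hMinj : ∀ v : Fin m → ℂ, M *ᵥ v = 0 → v = 0 := by
    intro v hv
    have hker : LinearMap.ker M.mulVecLin = ⊥ := by
      have h1 := LinearMap.finrank_range_add_finrank_ker M.mulVecLin
      have h2 : M.rank = m := hobs lam
      rw [Matrix.rank] at h2
      simp only [h2, Module.finrank_pi, Fintype.card_fin] at h1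
      have : Module.finrank ℂ (LinearMap.ker M.mulVecLin) = 0 := by omega
      exact Submodule.finrank_eq_zero.mp this
    have : v ∈ LinearMap.ker M.mulVecLin := by
      rw [LinearMap.mem_ker, Matrix.mulVecLin_apply]; exact hv
    rw [hker, Submodule.mem_bot] at this; exact this
  -- the projection to the last coordinate is injective on the eigenspace
  set E := Module.End.eigenspace (Matrix.toLin' A) lam
  let φ : E →ₗ[ℂ] ℂ := (LinearMap.proj (Sum.inr () : Fin m ⊕ Unit)).comp E.subtype
  have hφ : Function.Injective φ := by
    rw [← LinearMap.ker_eq_bot, eq_bot_iff]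
    rintro ⟨x, hx⟩ h0
    have hc : x (Sum.inr ()) = 0 := h0
    have hxe : A *ᵥ x = lam • x := by
      have := (Module.End.mem_eigenspace_iff.mp hx)
      rwa [Matrix.toLin'_apply] at this
    set v : Fin m → ℂ := x ∘ Sum.inl with hv
    have hMv : M *ᵥ v = 0 := by
      funext i
      cases i with
      | inl i =>
        have h1 : (A *ᵥ x) (Sum.inl i) = lam * x (Sum.inl i) := by
          rw [hxe]; simp
        have h2 : (A *ᵥ x) (Sum.inl i)
            = ∑ j, J i j * x (Sum.inl j) + u i * x (Sum.inr ()) := by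
          simp [A, Matrix.mulVec, dotProduct, Fintype.sum_sum_type,
            Matrix.fromBlocks, Matrix.replicateCol]
        rw [h2, hc, mul_zero, add_zero] at h1
        simp only [M, Matrix.mulVec, Matrix.fromRows_apply_inl, Matrix.of_apply, Sum.elim_inl,
          dotProduct, Matrix.sub_apply, Matrix.smul_apply, Matrix.one_apply,
          smul_eq_mul, sub_mul, mul_ite, mul_one, ite_mul, one_mul, zero_mul, mul_zero, Finset.sum_sub_distrib,
          Finset.sum_ite_eq, Finset.mem_univ, if_true, Pi.zero_apply, hv,
          Function.comp_apply]
        rw [← h1, sub_self]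
      | inr _ =>
        have h1 : (A *ᵥ x) (Sum.inr ()) = lam * x (Sum.inr ()) := by
          rw [hxe]; simp
        have h2 : (A *ᵥ x) (Sum.inr ())
            = -(∑ j, star (u j) * x (Sum.inl j)) + (a : ℂ) * x (Sum.inr ()) := by
          simp [A, Matrix.mulVec, dotProduct, Fintype.sum_sum_type,
            Matrix.fromBlocks, Matrix.replicateRow, Finset.sum_neg_distrib]
        simp only [hc, mul_zero, add_zero] at h1 h2
        have h3 : (∑ j, star (u j) * x (Sum.inl j)) = 0 :=
          neg_eq_zero.mp (h2 ▸ h1 : -(∑ j, star (u j) * x (Sum.inl j)) = 0)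
        simp only [M, Matrix.mulVec, Matrix.fromRows_apply_inr, Matrix.of_apply, Sum.elim_inr,
          Matrix.replicateRow, dotProduct, Pi.zero_apply, hv, Function.comp_apply]
        simpa using h3
    have hv0 : v = 0 := hMinj v hMv
    have hx0 : x = 0 := by
      funext i
      cases i with
      | inl i => exact congrFun hv0 i
      | inr i => cases i; exact hc
    rw [Submodule.mem_bot]
    exact Subtype.ext hx0
  -- conclude
  have hle : Module.finrank ℂ E ≤ 1 := by
    simpa using LinearMap.finrank_le_finrank_of_injective hφ
  have hge : 1 ≤ Module.finrank ℂ E := by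
    have : E ≠ ⊥ := heig
    have : Nontrivial E := Submodule.nontrivial_iff_ne_bot.mpr this
    exact Module.finrank_pos
  omega
end

section
/- Let A = [[J, u], [−u*, a]] with (J, u*) observable, J Hermitian, a ∈ ℝ. If x = (x₁, x₂) is an eigenvector of A with eigenvalue λ₀, then x₂ ≠ 0, and x₁ = x₂·(λ₀I − J)^{-1}u. -/
open Matrix

lemma star_dot_self_zero {n : Type*} [Fintype n] {v : n → ℂ} (h : star v ⬝ᵥ v = 0) : v = 0 := by
  have h2 : ∑ i, (Complex.normSq (v i) : ℂ) = 0 := by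
    rw [← h]
    refine Finset.sum_congr rfl fun i _ => ?_
    simp [dotProduct, Complex.normSq_eq_conj_mul_self]
  rw [← Complex.ofReal_sum, Complex.ofReal_eq_zero] at h2
  have h3 : ∀ i ∈ Finset.univ, Complex.normSq (v i) = 0 := by
    intro i _
    exact le_antisymm (h2 ▸ Finset.single_le_sum
      (fun j _ => Complex.normSq_nonneg (v j)) (Finset.mem_univ i)) (Complex.normSq_nonneg _)
  funext i
  exact Complex.normSq_eq_zero.mp (h3 i (Finset.mem_univ i))

lemma ker_of_rank {m : ℕ} {p : Type*} [Fintype p] (B : Matrix p (Fin m) ℂ)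
    (h : B.rank = m) {v : Fin m → ℂ} (hv : B *ᵥ v = 0) : v = 0 := by
  have h1 := LinearMap.finrank_range_add_finrank_ker B.mulVecLin
  rw [Module.finrank_pi] at h1
  have hk : Module.finrank ℂ (LinearMap.ker B.mulVecLin) = 0 := by
    have : Matrix.rank B = Module.finrank ℂ (LinearMap.range B.mulVecLin) := rfl
    simp [Fintype.card_fin] at h1
    omega
  have hbot : LinearMap.ker B.mulVecLin = ⊥ := Submodule.finrank_eq_zero.mp hk
  have : v ∈ LinearMap.ker B.mulVecLin := by
    simp [LinearMap.mem_ker, Matrix.mulVecLin_apply, hv]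
  rw [hbot] at this
  simpa using this

lemma obs_ker {m : ℕ} (J : Matrix (Fin m) (Fin m) ℂ) (u : Fin m → ℂ)
    (hobs : IsObservable J u) (lam : ℂ) {v : Fin m → ℂ}
    (h1 : (lam • (1 : Matrix (Fin m) (Fin m) ℂ) - J) *ᵥ v = 0)
    (h2 : star u ⬝ᵥ v = 0) : v = 0 := by
  refine ker_of_rank _ (hobs lam) ?_
  rw [fromRows_mulVec, h1]
  funext s
  rcases s with i | ⟨⟩
  · rfl
  · simpa [Matrix.mulVec, Matrix.replicateRow, dotProduct] using h2

/-- If `x = (x₁, x₂)` is an eigenvector of `A = [[J, u], [-u*, a]]` with eigenvalue `λ₀`,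
with `(J, u*)` observable, then `x₂ ≠ 0` and `x₁ = x₂ · (λ₀I - J)⁻¹ u`. -/
theorem stmt_6 {m : ℕ} (J : Matrix (Fin m) (Fin m) ℂ) (hJ : J.IsHermitian)
    (u : Fin m → ℂ) (a : ℝ) (hobs : IsObservable J u)
    (lam0 : ℂ) (x : Fin m ⊕ Unit → ℂ) (hx : x ≠ 0)
    (heig :
      (Matrix.fromBlocks J (Matrix.replicateCol Unit u) (-(Matrix.replicateRow Unit (star u)))
        (Matrix.of fun _ _ => (a : ℂ))) *ᵥ x = lam0 • x) :
    x (Sum.inr ()) ≠ 0 ∧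
      (fun i => x (Sum.inl i)) =
        x (Sum.inr ()) • ((lam0 • (1 : Matrix (Fin m) (Fin m) ℂ) - J)⁻¹ *ᵥ u) := by
  set x₁ : Fin m → ℂ := fun i => x (Sum.inl i) with hx₁
  set x₂ : ℂ := x (Sum.inr ()) with hx₂
  set M : Matrix (Fin m) (Fin m) ℂ := lam0 • (1 : Matrix (Fin m) (Fin m) ℂ) - J with hMdef
  have hsplit : x = Sum.elim x₁ (fun _ => x₂) := by
    funext s; rcases s with i | ⟨⟩ <;> rfl
  rw [hsplit, fromBlocks_mulVec] at heig
  -- first block equation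
  have eq1 : J *ᵥ x₁ + x₂ • u = lam0 • x₁ := by
    funext i
    have := congrFun heig (Sum.inl i)
    simpa [Matrix.mulVec, dotProduct, Matrix.replicateCol, mul_comm] using this
  have hM : M *ᵥ x₁ = x₂ • u := by
    funext i
    have := congrFun eq1 i
    simp only [hMdef, Matrix.sub_mulVec, Matrix.smul_mulVec, Matrix.one_mulVec]
    have h' : (J *ᵥ x₁) i + (x₂ • u) i = (lam0 • x₁) i := congrFun eq1 i
    simp only [Pi.add_apply, Pi.smul_apply, Pi.sub_apply, smul_eq_mul] at h' ⊢
    linear_combination -h'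
  -- second block equation
  have eq2 : -(star u ⬝ᵥ x₁) + a * x₂ = lam0 * x₂ := by
    have := congrFun heig (Sum.inr ())
    simpa [Matrix.mulVec, dotProduct, Matrix.replicateRow, Matrix.neg_apply] using this
  -- x₂ ≠ 0
  have hx2 : x₂ ≠ 0 := by
    intro h0
    have hM0 : M *ᵥ x₁ = 0 := by rw [hM, h0, zero_smul]
    have hu0 : star u ⬝ᵥ x₁ = 0 := by
      rw [h0] at eq2
      simpa using eq2
    have hx10 : x₁ = 0 := obs_ker J u hobs lam0 hM0 hu0
    apply hx
    funext s
    rcases s with i | ⟨⟩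
    · exact congrFun hx10 i
    · exact h0
  refine ⟨hx2, ?_⟩
  -- M is invertible
  have hdet : M.det ≠ 0 := by
    intro hdet0
    obtain ⟨v, hv0, hMv⟩ := (Matrix.exists_mulVec_eq_zero_iff).mpr hdet0
    have hJv : J *ᵥ v = lam0 • v := by
      funext i
      have h' := congrFun hMv i
      simp only [hMdef, Matrix.sub_mulVec, Matrix.smul_mulVec, Matrix.one_mulVec,
        Pi.sub_apply, Pi.smul_apply, Pi.zero_apply, smul_eq_mul] at h' ⊢
      linear_combination -h'
    have hc : star v ⬝ᵥ v ≠ 0 := fun h => hv0 (star_dot_self_zero h)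
    have h1 : star v ⬝ᵥ (J *ᵥ v) = lam0 * (star v ⬝ᵥ v) := by
      rw [hJv, dotProduct_smul, smul_eq_mul]
    have h2 : star v ⬝ᵥ (J *ᵥ v) = star lam0 * (star v ⬝ᵥ v) := by
      calc star v ⬝ᵥ (J *ᵥ v) = (star v ᵥ* J) ⬝ᵥ v := Matrix.dotProduct_mulVec _ _ _
        _ = (star v ᵥ* Jᴴ) ⬝ᵥ v := by rw [hJ.eq]
        _ = star (J *ᵥ v) ⬝ᵥ v := by rw [Matrix.star_mulVec]
        _ = star (lam0 • v) ⬝ᵥ v := by rw [hJv]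
        _ = star lam0 * (star v ⬝ᵥ v) := by
            rw [star_smul, smul_dotProduct, smul_eq_mul]
    have hreal : star lam0 = lam0 := mul_right_cancel₀ hc (h2.symm.trans h1)
    have hMH : M.IsHermitian := by
      simp only [Matrix.IsHermitian, hMdef, Matrix.conjTranspose_sub,
        Matrix.conjTranspose_smul, Matrix.conjTranspose_one, hJ.eq, hreal]
    have hrow : star v ᵥ* M = 0 := by
      calc star v ᵥ* M = star v ᵥ* Mᴴ := by rw [hMH.eq]
        _ = star (M *ᵥ v) := (Matrix.star_mulVec _ _).symm
        _ = 0 := by rw [hMv, star_zero]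
    have hvu : star v ⬝ᵥ u = 0 := by
      have h3 : star v ⬝ᵥ (M *ᵥ x₁) = 0 := by
        rw [Matrix.dotProduct_mulVec, hrow, zero_dotProduct]
      rw [hM, dotProduct_smul, smul_eq_mul] at h3
      exact (mul_eq_zero.mp h3).resolve_left hx2
    have huv : star u ⬝ᵥ v = 0 := by
      have h4 := congrArg star hvu
      simp only [dotProduct, star_sum, star_mul', star_star, star_zero,
        Pi.star_apply] at h4
      simpa [dotProduct, mul_comm] using h4
    exact hv0 (obs_ker J u hobs lam0 hMv huv)
  have hinv : IsUnit M.det := isUnit_iff_ne_zero.mpr hdet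
  have hfin := congrArg (fun w => M⁻¹ *ᵥ w) hM
  simpa [Matrix.mulVec_mulVec, Matrix.nonsing_inv_mul M hinv, Matrix.one_mulVec,
    Matrix.mulVec_smul] using hfin
end

section
/- Let h(λ) = λ − a and g(λ) = −∑_{j=1}^{n-1} d_j/(λ − μ_j) with d_j > 0 and distinct real μ_j. Then on each bounded interval (μ_{j+1}, μ_j) between consecutive poles, the equation h(λ) = g(λ) has at least one and at most three real solutions counted with multiplicity. -/
open Finset Polynomial

/-- The numerator polynomial of `(λ - a) - g(λ)`:
`p(λ) = (λ - a)∏ⱼ(λ - μⱼ) + ∑ⱼ dⱼ ∏_{k ≠ j}(λ - μₖ)`. -/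
noncomputable def interP {m : ℕ} (a : ℝ) (μ d : Fin m → ℝ) : Polynomial ℝ :=
  (X - C a) * ∏ j, (X - C (μ j)) +
    ∑ j, C (d j) * ∏ k ∈ Finset.univ.erase j, (X - C (μ k))

/-! ### Auxiliary machinery: the quotient-rule numerator step -/

noncomputable def qstep (Q R : Polynomial ℝ) (n : ℕ) : Polynomial ℝ :=
  derivative R * Q - (n : Polynomial ℝ) * (derivative Q * R)

lemma hasDerivAt_qstep_aux (Q R : Polynomial ℝ) (n : ℕ) (x : ℝ) (hx : Q.eval x ≠ 0) :
    HasDerivAt (fun y => R.eval y / Q.eval y ^ (n+1))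
      ((qstep Q R (n+1)).eval x / Q.eval x ^ (n+2)) x := by
  have h := (R.hasDerivAt x).div ((Q.hasDerivAt x).fun_pow (n+1)) (pow_ne_zero (n+1) hx)
  refine h.congr_deriv ?_
  simp only [qstep, eval_sub, eval_mul, eval_natCast, Nat.add_sub_cancel, Nat.cast_add,
    Nat.cast_one, eval_add, eval_one]
  field_simp
  ring

lemma hasDerivAt_qstep (Q R : Polynomial ℝ) (n : ℕ) (hn : n ≠ 0) (x : ℝ) (hx : Q.eval x ≠ 0) :
    HasDerivAt (fun y => R.eval y / Q.eval y ^ n)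
      ((qstep Q R n).eval x / Q.eval x ^ (n+1)) x := by
  obtain ⟨k, rfl⟩ := Nat.exists_eq_succ_of_ne_zero hn
  exact hasDerivAt_qstep_aux Q R k x hx

lemma qstep_rootMultiplicity (Q R : Polynomial ℝ) (n : ℕ) (hW : qstep Q R n ≠ 0) (x : ℝ) :
    R.rootMultiplicity x - 1 ≤ (qstep Q R n).rootMultiplicity x := by
  rw [Polynomial.le_rootMultiplicity_iff hW]
  have h2 : (X - C x) ^ (R.rootMultiplicity x - 1) ∣ R :=
    (pow_dvd_pow _ (Nat.sub_le _ _)).trans (R.pow_rootMultiplicity_dvd x)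
  have h1 : (X - C x) ^ (R.rootMultiplicity x - 1) ∣ derivative R := by
    rcases eq_or_ne (derivative R) 0 with h | h
    · simp [h]
    · exact (pow_dvd_pow _
        (R.rootMultiplicity_sub_one_le_derivative_rootMultiplicity x)).trans
        ((derivative R).pow_rootMultiplicity_dvd x)
  exact dvd_sub (h1.mul_right _) ((h2.mul_left _).mul_left _)

lemma qstep_interleave (Q R : Polynomial ℝ) (n : ℕ) (hn : n ≠ 0) {α β : ℝ}
    (hQ : ∀ x ∈ Set.Ioo α β, Q.eval x ≠ 0) (hR : R ≠ 0) (hW : qstep Q R n ≠ 0) :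
    (R.roots.toFinset.filter (· ∈ Set.Ioo α β)).card ≤
      (((qstep Q R n).roots.toFinset.filter (· ∈ Set.Ioo α β)) \
        (R.roots.toFinset.filter (· ∈ Set.Ioo α β))).card + 1 := by
  obtain ⟨k, rfl⟩ := Nat.exists_eq_succ_of_ne_zero hn
  refine Finset.card_le_diff_of_interleaved fun x hx y hy hxy hxy' => ?_
  simp only [Finset.mem_filter, Multiset.mem_toFinset, mem_roots hR] at hx hy
  have hsub : Set.Icc x y ⊆ Set.Ioo α β := Set.Icc_subset _ hx.2 hy.2
  set g : ℝ → ℝ := fun y => R.eval y / Q.eval y ^ (k+1) with hg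
  have hdiff : ∀ z ∈ Set.Icc x y, HasDerivAt g
      ((qstep Q R (k+1)).eval z / Q.eval z ^ (k+2)) z :=
    fun z hz => hasDerivAt_qstep_aux Q R k z (hQ z (hsub hz))
  have hcont : ContinuousOn g (Set.Icc x y) :=
    fun z hz => ((hdiff z hz).continuousAt).continuousWithinAt
  have hgx : g x = 0 := by simp [hg, hx.1.eq_zero]
  have hgy : g y = 0 := by simp [hg, hy.1.eq_zero]
  obtain ⟨z, hz, hz0⟩ := exists_deriv_eq_zero hxy hcont (hgx.trans hgy.symm)
  refine ⟨z, ?_, hz.1, hz.2⟩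
  have hzIoo : z ∈ Set.Ioo α β := hsub (Set.Ioo_subset_Icc_self hz)
  have h0 : (qstep Q R (k+1)).eval z / Q.eval z ^ (k+2) = 0 := by
    rw [← (hdiff z (Set.Ioo_subset_Icc_self hz)).deriv, hz0]
  have hWz : (qstep Q R (k+1)).eval z = 0 := by
    rcases div_eq_zero_iff.1 h0 with h | h
    · exact h
    · exact absurd h (pow_ne_zero _ (hQ z hzIoo))
  simp only [Finset.mem_filter, Multiset.mem_toFinset, mem_roots hW]
  exact ⟨hWz, hzIoo⟩

lemma card_filter_roots (R : Polynomial ℝ) (pred : ℝ → Prop) [DecidablePred pred] :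
    Multiset.card (R.roots.filter pred) =
      ∑ x ∈ R.roots.toFinset.filter pred, R.roots.count x := by
  classical
  rw [← Multiset.toFinset_sum_count_eq, Multiset.toFinset_filter]
  exact Finset.sum_congr rfl fun x hx =>
    Multiset.count_filter_of_pos (Finset.mem_filter.1 hx).2

lemma card_filter_le_qstep (Q R : Polynomial ℝ) (n : ℕ) (hn : n ≠ 0) {α β : ℝ}
    (hQ : ∀ x ∈ Set.Ioo α β, Q.eval x ≠ 0) (hR : R ≠ 0) (hW : qstep Q R n ≠ 0) :
    Multiset.card (R.roots.filter (· ∈ Set.Ioo α β)) ≤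
      Multiset.card ((qstep Q R n).roots.filter (· ∈ Set.Ioo α β)) + 1 := by
  classical
  set W := qstep Q R n with hWdef
  set A := R.roots.toFinset.filter (· ∈ Set.Ioo α β) with hA
  set B := W.roots.toFinset.filter (· ∈ Set.Ioo α β) with hB
  calc
    Multiset.card (R.roots.filter (· ∈ Set.Ioo α β)) = ∑ x ∈ A, R.roots.count x :=
      card_filter_roots R _
    _ = ∑ x ∈ A, (R.roots.count x - 1 + 1) :=
      (Finset.sum_congr rfl fun x hx => (tsub_add_cancel_of_le <|
        Nat.succ_le_iff.2 <| Multiset.count_pos.2 <| Multiset.mem_toFinset.1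
          (Finset.mem_filter.1 hx).1).symm)
    _ = (∑ x ∈ A, (R.rootMultiplicity x - 1)) + A.card := by
      simp only [Finset.sum_add_distrib, Finset.card_eq_sum_ones, count_roots]
    _ ≤ (∑ x ∈ A, W.rootMultiplicity x) + ((B \ A).card + 1) :=
      add_le_add
        (Finset.sum_le_sum fun x _ => qstep_rootMultiplicity Q R n hW x)
        (qstep_interleave Q R n hn hQ hR hW)
    _ ≤ (∑ x ∈ A, W.roots.count x) + ((∑ x ∈ B \ A, W.roots.count x) + 1) := by
      simp only [← count_roots]
      refine add_le_add_right (add_le_add_left ((Finset.card_eq_sum_ones _).trans_le ?_) _) _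
      refine Finset.sum_le_sum fun x hx => Nat.succ_le_iff.2 ?_
      rw [Multiset.count_pos, ← Multiset.mem_toFinset]
      exact (Finset.mem_filter.1 (Finset.mem_sdiff.1 hx).1).1
    _ = Multiset.card (W.roots.filter (· ∈ Set.Ioo α β)) + 1 := by
      rw [← add_assoc, ← Finset.sum_union Finset.disjoint_sdiff,
        Finset.union_sdiff_self_eq_union, card_filter_roots W, ← hB,
        ← Finset.sum_subset Finset.subset_union_right]
      intro x hx hx2
      rcases Finset.mem_union.1 hx with h | h
      · rw [Multiset.count_eq_zero]
        intro hmem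
        exact hx2 (Finset.mem_filter.2 ⟨Multiset.mem_toFinset.2 hmem,
          (Finset.mem_filter.1 h).2⟩)
      · exact absurd h hx2

/-! ### Analytic lemmas about the partial-fraction sum -/

lemma hasDerivAt_invpow_aux (c : ℝ) (n : ℕ) (x : ℝ) (h : x ≠ c) :
    HasDerivAt (fun y => ((y - c) ^ (n+1))⁻¹)
      (-(n+1) * ((x - c) ^ (n+2))⁻¹) x := by
  have h1 : HasDerivAt (fun y => (y - c) ^ (n+1)) (((n:ℝ)+1) * (x - c) ^ n) x := by
    have := ((hasDerivAt_id x).sub_const c).fun_pow (n+1)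
    simpa using this
  have hc : x - c ≠ 0 := sub_ne_zero.2 h
  have h2 := h1.fun_inv (pow_ne_zero _ hc)
  refine h2.congr_deriv ?_
  field_simp
  ring

lemma hasDerivAt_invpow (c : ℝ) (n : ℕ) (hn : n ≠ 0) (x : ℝ) (h : x ≠ c) :
    HasDerivAt (fun y => ((y - c) ^ n)⁻¹) (-(n:ℝ) * ((x - c) ^ (n+1))⁻¹) x := by
  obtain ⟨k, rfl⟩ := Nat.exists_eq_succ_of_ne_zero hn
  push_cast
  exact hasDerivAt_invpow_aux c k x h

lemma hasDerivAt_Fsum {m : ℕ} (d μ : Fin m → ℝ) (n : ℕ) (hn : n ≠ 0) (x : ℝ)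
    (h : ∀ k, x ≠ μ k) :
    HasDerivAt (fun y => ∑ k, d k * ((y - μ k) ^ n)⁻¹)
      (-(n:ℝ) * ∑ k, d k * ((x - μ k) ^ (n+1))⁻¹) x := by
  have h1 : HasDerivAt (fun y => ∑ k, d k * ((y - μ k) ^ n)⁻¹)
      (∑ k, d k * (-(n:ℝ) * ((x - μ k) ^ (n+1))⁻¹)) x :=
    HasDerivAt.fun_sum fun k _ => (hasDerivAt_invpow (μ k) n hn x (h k)).const_mul (d k)
  convert h1 using 1
  rw [Finset.mul_sum]
  exact Finset.sum_congr rfl fun k _ => by ring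

lemma interP_eval_mu {m : ℕ} (a : ℝ) (μ d : Fin m → ℝ) (i : Fin m) :
    (interP a μ d).eval (μ i) = d i * ∏ k ∈ Finset.univ.erase i, (μ i - μ k) := by
  simp only [interP, eval_add, eval_mul, eval_sub, eval_X, eval_C, eval_prod,
    eval_finset_sum]
  rw [Finset.prod_eq_zero (Finset.mem_univ i) (by simp), mul_zero, zero_add]
  rw [Finset.sum_eq_single i]
  · intro b _ hbi
    exact mul_eq_zero_of_right _ (Finset.prod_eq_zero
      (Finset.mem_erase.2 ⟨Ne.symm hbi, Finset.mem_univ i⟩) (by simp))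
  · intro h; exact absurd (Finset.mem_univ i) h

/-! ### Main theorem -/

/-- On each bounded interval `(μ_{j+1}, μ_j)` between consecutive poles, the equation
`h(λ) = g(λ)` (equivalently `p(λ) = 0`) has at least one and at most three real
solutions counted with multiplicity. -/
theorem stmt_11 {m : ℕ} (a : ℝ) (μ d : Fin m → ℝ)
    (hμ : StrictAnti μ) (hd : ∀ j, 0 < d j)
    (j : Fin m) (hj : (j : ℕ) + 1 < m) :
    1 ≤ (((interP a μ d).roots).filter
        (fun x => μ ⟨(j : ℕ) + 1, hj⟩ < x ∧ x < μ j)).card ∧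
      (((interP a μ d).roots).filter
        (fun x => μ ⟨(j : ℕ) + 1, hj⟩ < x ∧ x < μ j)).card ≤ 3 := by
  classical
  set j' : Fin m := ⟨(j : ℕ) + 1, hj⟩ with hj'def
  set α := μ j' with hαdef
  set β := μ j with hβdef
  have hjj' : j < j' := by simp [Fin.lt_def, hj'def]
  have hαβ : α < β := hμ hjj'
  set Q : Polynomial ℝ := ∏ k, (X - C (μ k)) with hQdef
  set p := interP a μ d with hpdef
  have hfilter : p.roots.filter (fun x => μ j' < x ∧ x < μ j)
      = p.roots.filter (· ∈ Set.Ioo α β) :=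
    Multiset.filter_congr (fun x _ => by simp [Set.mem_Ioo, hαdef, hβdef])
  -- no pole in the open interval
  have hne : ∀ x ∈ Set.Ioo α β, ∀ k, x ≠ μ k := by
    intro x hx k
    rcases le_or_gt k j with h | h
    · have hk : β ≤ μ k := hμ.antitone h
      intro he
      rw [he] at hx
      exact absurd hx.2 (not_lt.2 hk)
    · have hk' : j' ≤ k := by
        rw [Fin.le_def]
        rw [Fin.lt_def] at h
        simp only [hj'def]
        omega
      have hk : μ k ≤ α := hμ.antitone hk'
      intro he
      rw [he] at hx
      exact absurd hx.1 (not_lt.2 hk)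
  have hQne : ∀ x ∈ Set.Ioo α β, Q.eval x ≠ 0 := by
    intro x hx
    rw [hQdef, eval_prod]
    refine Finset.prod_ne_zero_iff.2 fun k _ => ?_
    simp only [eval_sub, eval_X, eval_C]
    exact sub_ne_zero.2 (hne x hx k)
  -- endpoint evaluations and signs
  have hpβ : p.eval β = d j * ∏ k ∈ Finset.univ.erase j, (μ j - μ k) := interP_eval_mu a μ d j
  have hpα : p.eval α = d j' * ∏ k ∈ Finset.univ.erase j', (μ j' - μ k) :=
    interP_eval_mu a μ d j'
  have hjne : j ≠ j' := ne_of_lt hjj'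
  have hj'memj : j' ∈ Finset.univ.erase j := Finset.mem_erase.2 ⟨Ne.symm hjne, Finset.mem_univ _⟩
  have hjmemj' : j ∈ Finset.univ.erase j' := Finset.mem_erase.2 ⟨hjne, Finset.mem_univ _⟩
  have hsplitβ : ∏ k ∈ Finset.univ.erase j, (μ j - μ k)
      = (μ j - μ j') * ∏ k ∈ (Finset.univ.erase j).erase j', (μ j - μ k) :=
    (Finset.mul_prod_erase _ _ hj'memj).symm
  have hsplitα : ∏ k ∈ Finset.univ.erase j', (μ j' - μ k)
      = (μ j' - μ j) * ∏ k ∈ (Finset.univ.erase j).erase j', (μ j' - μ k) := by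
    rw [Finset.erase_right_comm]
    exact (Finset.mul_prod_erase _ _ hjmemj').symm
  have hEpos : 0 < ∏ k ∈ (Finset.univ.erase j).erase j', ((μ j - μ k) * (μ j' - μ k)) := by
    refine Finset.prod_pos fun k hk => ?_
    have hk1 : k ≠ j' := (Finset.mem_erase.1 hk).1
    have hk2 : k ≠ j := (Finset.mem_erase.1 (Finset.mem_erase.1 hk).2).1
    have hval : (k : ℕ) < (j : ℕ) ∨ (j' : ℕ) < (k : ℕ) := by
      have h1 : (k : ℕ) ≠ (j : ℕ) := fun h => hk2 (Fin.ext h)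
      have h2 : (k : ℕ) ≠ (j' : ℕ) := fun h => hk1 (Fin.ext h)
      simp only [hj'def] at h2 ⊢
      omega
    rcases hval with h | h
    · have h1 : μ j < μ k := hμ h
      have h2 : μ j' < μ j := hαβ
      exact mul_pos_of_neg_of_neg (by linarith) (by linarith)
    · have h1 : μ k < μ j' := hμ h
      have h2 : μ j' < μ j := hαβ
      exact mul_pos (by linarith) (by linarith)
  have hprodneg : p.eval α * p.eval β < 0 := by
    have heq : p.eval α * p.eval β = (d j' * d j) *
        (((μ j' - μ j) * (μ j - μ j')) *
          ∏ k ∈ (Finset.univ.erase j).erase j', ((μ j - μ k) * (μ j' - μ k))) := by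
      rw [hpα, hpβ, hsplitα, hsplitβ, Finset.prod_mul_distrib]
      ring
    rw [heq]
    refine mul_neg_of_pos_of_neg (mul_pos (hd j') (hd j)) ?_
    refine mul_neg_of_neg_of_pos ?_ hEpos
    have := hαβ
    nlinarith
  have hpβne : p.eval β ≠ 0 := by
    intro h
    rw [h, mul_zero] at hprodneg
    exact lt_irrefl 0 hprodneg
  have hp0 : p ≠ 0 := by
    intro h
    rw [h] at hpβne
    simp at hpβne
  -- lower bound via IVT
  have hlow : ∃ x ∈ Set.Ioo α β, p.eval x = 0 := by
    rcases lt_trichotomy (p.eval α) 0 with h | h | h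
    · have hb : 0 < p.eval β := by nlinarith
      obtain ⟨x, hx, hx0⟩ := intermediate_value_Ioo hαβ.le p.continuousOn ⟨h, hb⟩
      exact ⟨x, hx, hx0⟩
    · rw [h, zero_mul] at hprodneg
      exact absurd hprodneg (lt_irrefl 0)
    · have hb : p.eval β < 0 := by nlinarith
      obtain ⟨x, hx, hx0⟩ := intermediate_value_Ioo' hαβ.le p.continuousOn ⟨hb, h⟩
      exact ⟨x, hx, hx0⟩
  have hcard1 : 1 ≤ Multiset.card (p.roots.filter (· ∈ Set.Ioo α β)) := by
    obtain ⟨x0, hx0mem, hx0⟩ := hlow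
    exact Multiset.card_pos_iff_exists_mem.2
      ⟨x0, Multiset.mem_filter.2 ⟨(mem_roots hp0).2 hx0, hx0mem⟩⟩
  -- the derivative chain
  set S : ℕ → ℝ → ℝ := fun n x => ∑ k, d k * ((x - μ k) ^ n)⁻¹ with hSdef
  set W1 := qstep Q p 1 with hW1def
  set W2 := qstep Q W1 2 with hW2def
  set W3 := qstep Q W2 3 with hW3def
  have key : ∀ (R : Polynomial ℝ) (n : ℕ), n ≠ 0 → ∀ (f g : ℝ → ℝ),
      (∀ x ∈ Set.Ioo α β, R.eval x / Q.eval x ^ n = f x) →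
      (∀ x ∈ Set.Ioo α β, HasDerivAt f (g x) x) →
      ∀ x ∈ Set.Ioo α β, (qstep Q R n).eval x / Q.eval x ^ (n+1) = g x := by
    intro R n hn f g heq hder x hx
    have h1 := hasDerivAt_qstep Q R n hn x (hQne x hx)
    have h2 : HasDerivAt (fun y => R.eval y / Q.eval y ^ n) (g x) x := by
      refine (hder x hx).congr_of_eventuallyEq ?_
      filter_upwards [Ioo_mem_nhds hx.1 hx.2] with y hy
      exact heq y hy
    exact h1.unique h2
  -- base identity p/Q = f0
  have he0 : ∀ x ∈ Set.Ioo α β, p.eval x / Q.eval x ^ 1 = x - a + S 1 x := by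
    intro x hx
    rw [pow_one, div_eq_iff (hQne x hx)]
    simp only [hpdef, interP, eval_add, eval_mul, eval_sub, eval_X, eval_C, eval_prod,
      eval_finset_sum, hSdef, hQdef]
    rw [add_mul, Finset.sum_mul]
    congr 1
    refine Finset.sum_congr rfl fun k _ => ?_
    rw [← Finset.mul_prod_erase Finset.univ (fun i => x - μ i) (Finset.mem_univ k)]
    have hk : x - μ k ≠ 0 := sub_ne_zero.2 (hne x hx k)
    field_simp
  have hder0 : ∀ x ∈ Set.Ioo α β, HasDerivAt (fun y => y - a + S 1 y) (1 - S 2 x) x := by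
    intro x hx
    have h := ((hasDerivAt_id x).sub_const a).add (hasDerivAt_Fsum d μ 1 one_ne_zero x
      (hne x hx))
    have hv : (1 : ℝ) + (-(1:ℕ) * S 2 x) = 1 - S 2 x := by push_cast; ring
    rw [← hv]
    exact h
  have hder1 : ∀ x ∈ Set.Ioo α β, HasDerivAt (fun y => 1 - S 2 y) (2 * S 3 x) x := by
    intro x hx
    have h := (hasDerivAt_const x (1:ℝ)).sub (hasDerivAt_Fsum d μ 2 two_ne_zero x (hne x hx))
    have hv : (0 : ℝ) - (-(2:ℕ) * S 3 x) = 2 * S 3 x := by push_cast; ring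
    rw [← hv]
    exact h
  have hder2 : ∀ x ∈ Set.Ioo α β, HasDerivAt (fun y => 2 * S 3 y) (-6 * S 4 x) x := by
    intro x hx
    have h := (hasDerivAt_Fsum d μ 3 three_ne_zero x (hne x hx)).const_mul (2:ℝ)
    have hv : (2 : ℝ) * (-(3:ℕ) * S 4 x) = -6 * S 4 x := by push_cast; ring
    rw [← hv]
    exact h
  have he1 : ∀ x ∈ Set.Ioo α β, W1.eval x / Q.eval x ^ 2 = 1 - S 2 x :=
    key p 1 one_ne_zero _ _ he0 hder0
  have he2 : ∀ x ∈ Set.Ioo α β, W2.eval x / Q.eval x ^ 3 = 2 * S 3 x :=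
    key W1 2 two_ne_zero _ _ he1 hder1
  have he3 : ∀ x ∈ Set.Ioo α β, W3.eval x / Q.eval x ^ 4 = -6 * S 4 x :=
    key W2 3 three_ne_zero _ _ he2 hder2
  -- W3 is negative on the interval
  have hW3neg : ∀ x ∈ Set.Ioo α β, W3.eval x < 0 := by
    intro x hx
    have hQ4 : 0 < Q.eval x ^ 4 :=
      lt_of_le_of_ne (by positivity) (Ne.symm (pow_ne_zero 4 (hQne x hx)))
    have hS4 : 0 < S 4 x := by
      refine Finset.sum_pos (fun k _ => ?_) ⟨j, Finset.mem_univ j⟩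
      have hk : x - μ k ≠ 0 := sub_ne_zero.2 (hne x hx k)
      have h4 : 0 < (x - μ k) ^ 4 :=
        lt_of_le_of_ne (by positivity) (Ne.symm (pow_ne_zero 4 hk))
      exact mul_pos (hd k) (inv_pos.2 h4)
    have := he3 x hx
    rw [div_eq_iff (ne_of_gt hQ4)] at this
    rw [this]
    nlinarith
  -- nonvanishing of the chain
  have hx0mid : (α + β) / 2 ∈ Set.Ioo α β := ⟨by linarith, by linarith⟩
  have hW3ne : W3 ≠ 0 := by
    intro h
    have := hW3neg _ hx0mid
    rw [h] at this
    simp at this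
  have hW2ne : W2 ≠ 0 := by
    intro h
    apply hW3ne
    rw [hW3def, h]
    simp [qstep]
  have hW1ne : W1 ≠ 0 := by
    intro h
    apply hW2ne
    rw [hW2def, h]
    simp [qstep]
  -- W3 has no roots in the interval
  have hW3empty : Multiset.card (W3.roots.filter (· ∈ Set.Ioo α β)) = 0 := by
    rw [Multiset.card_eq_zero]
    rw [Multiset.filter_eq_nil]
    intro x hxr hxI
    exact absurd (isRoot_of_mem_roots hxr) (ne_of_lt (hW3neg x hxI))
  -- assemble the upper bound
  have hc1 : Multiset.card (p.roots.filter (· ∈ Set.Ioo α β)) ≤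
      Multiset.card (W1.roots.filter (· ∈ Set.Ioo α β)) + 1 :=
    card_filter_le_qstep Q p 1 one_ne_zero hQne hp0 hW1ne
  have hc2 : Multiset.card (W1.roots.filter (· ∈ Set.Ioo α β)) ≤
      Multiset.card (W2.roots.filter (· ∈ Set.Ioo α β)) + 1 :=
    card_filter_le_qstep Q W1 2 two_ne_zero hQne hW1ne hW2ne
  have hc3 : Multiset.card (W2.roots.filter (· ∈ Set.Ioo α β)) ≤
      Multiset.card (W3.roots.filter (· ∈ Set.Ioo α β)) + 1 :=
    card_filter_le_qstep Q W2 3 three_ne_zero hQne hW2ne hW3ne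
  rw [hfilter]
  exact ⟨hcard1, by omega⟩
end

section
/- With A = [[J, u], [−u*, a]], (J, u*) observable, J Hermitian with eigenvalues μ_j and g(λ) = −u*(λI − J)^{-1}u, the real eigenvalues of A are exactly the real solutions of λ − a = g(λ), and each interval (μ_{j+1}, μ_j) between consecutive eigenvalues of J contains at least one real eigenvalue of A (except possibly one such interval). -/
open Matrix

lemma mem_spectrum_iff_det' {n : Type*} [Fintype n] [DecidableEq n]
    (M : Matrix n n ℂ) (t : ℂ) :
    t ∈ spectrum ℂ M ↔ det (t • (1 : Matrix n n ℂ) - M) = 0 := by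
  rw [spectrum.mem_iff, Matrix.isUnit_iff_isUnit_det, isUnit_iff_ne_zero, not_not,
    Algebra.algebraMap_eq_smul_one]

lemma det_fromBlocks_unit' {n : Type*} [Fintype n] [DecidableEq n]
    (B : Matrix n n ℂ) (hB : IsUnit B.det) (c r : n → ℂ) (x : ℂ) :
    det (fromBlocks B (replicateCol Unit c) (replicateRow Unit r) (of fun _ _ => x))
      = det B * (x - r ⬝ᵥ (B⁻¹ *ᵥ c)) := by
  haveI := B.invertibleOfIsUnitDet hB
  rw [det_fromBlocks₁₁]
  congr 1
  rw [invOf_eq_nonsing_inv, det_unique, Matrix.mul_assoc, ← replicateCol_mulVec, replicateRow_mul_replicateCol]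
  simp

open Complex in
lemma det_bordered_diag' {m : ℕ} (w : Fin m → ℂ) (v : Fin m → ℂ) (b : ℂ)
    (hv : ∀ k, v k ≠ 0) :
    det (fromBlocks (diagonal v) (replicateCol Unit (-w)) (replicateRow Unit (star w)) (of fun _ _ => b))
      = b * ∏ k, v k + ∑ k, (normSq (w k) : ℂ) * ∏ l ∈ Finset.univ.erase k, v l := by
  have hdet : IsUnit (det (diagonal v)) := by
    rw [det_diagonal, isUnit_iff_ne_zero]
    exact Finset.prod_ne_zero_iff.mpr fun k _ => hv k
  have hinv : (diagonal v)⁻¹ = diagonal (fun k => (v k)⁻¹) := by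
    apply inv_eq_right_inv
    rw [diagonal_mul_diagonal]
    have h5 : (fun i => v i * (v i)⁻¹) = fun _ : Fin m => (1 : ℂ) :=
      funext fun k => mul_inv_cancel₀ (hv k)
    rw [h5, diagonal_one]
  rw [det_fromBlocks_unit' _ hdet, det_diagonal, hinv]
  have hdot : star w ⬝ᵥ ((diagonal (fun k => (v k)⁻¹)) *ᵥ (-w))
      = -∑ k, (normSq (w k) : ℂ) * (v k)⁻¹ := by
    simp only [mulVec_neg, dotProduct_neg, neg_inj]
    rw [dotProduct, Finset.sum_congr rfl]
    intro k _
    simp [mulVec_diagonal, Pi.star_apply, normSq_eq_conj_mul_self]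
    ring
  have expand : ∀ k : Fin m, (∏ l, v l) * ((normSq (w k) : ℂ) * (v k)⁻¹)
      = (normSq (w k) : ℂ) * ∏ l ∈ Finset.univ.erase k, v l := by
    intro k
    have h1 : (∏ l, v l) = v k * ∏ l ∈ Finset.univ.erase k, v l :=
      (Finset.mul_prod_erase _ _ (Finset.mem_univ k)).symm
    rw [h1]
    field_simp [hv k]
  rw [hdot, sub_neg_eq_add, mul_add, Finset.mul_sum,
    Finset.sum_congr rfl (fun k _ => expand k), mul_comm]

/-- With `(J, u*)` observable and `μ_{n-1} < ⋯ < μ₁` the eigenvalues of `J`, the real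
eigenvalues of `A = [[J, u], [-u*, a]]` are exactly the real solutions of
`λ - a = g(λ)` where `g(λ) = -u*(λI - J)⁻¹u`, and every interval `(μ_{j+1}, μ_j)`
between consecutive eigenvalues of `J`, except possibly one, contains a real
eigenvalue of `A`. -/
theorem stmt_13 {m : ℕ} (J : Matrix (Fin m) (Fin m) ℂ) (hJ : J.IsHermitian)
    (u : Fin m → ℂ) (a : ℝ) (hobs : IsObservable J u)
    (μ : Fin m → ℝ) (hμ : StrictAnti μ)
    (hspec : spectrum ℂ J = Set.range fun j => (μ j : ℂ)) :
    let A : Matrix (Fin m ⊕ Unit) (Fin m ⊕ Unit) ℂ :=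
      Matrix.fromBlocks J (Matrix.replicateCol Unit u) (-(Matrix.replicateRow Unit (star u)))
        (Matrix.of fun _ _ => (a : ℂ))
    (∀ t : ℝ, (t : ℂ) ∈ spectrum ℂ A ↔
        ((t : ℂ) ∉ spectrum ℂ J ∧
          (t : ℂ) - (a : ℂ) =
            -(star u ⬝ᵥ (((t : ℂ) • (1 : Matrix (Fin m) (Fin m) ℂ) - J)⁻¹ *ᵥ u)))) ∧
      {j : ℕ | ∃ hj : j + 1 < m,
          ¬∃ t : ℝ, μ ⟨j + 1, hj⟩ < t ∧ t < μ ⟨j, Nat.lt_of_succ_lt hj⟩ ∧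
            (t : ℂ) ∈ spectrum ℂ A}.ncard ≤ 1 := by
  intro A
  have hA : A = Matrix.fromBlocks J (Matrix.replicateCol Unit u) (-(Matrix.replicateRow Unit (star u)))
      (Matrix.of fun _ _ => (a : ℂ)) := rfl
  classical
  -- spectral setup
  set V : Matrix (Fin m) (Fin m) ℂ := (hJ.eigenvectorUnitary : Matrix (Fin m) (Fin m) ℂ)
    with hVdef
  set e : Fin m → ℝ := hJ.eigenvalues with hedef
  have hV : J = V * diagonal (fun k => (e k : ℂ)) * Vᴴ := by
    have := hJ.spectral_theorem
    rw [hVdef, hedef]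
    simpa [Function.comp_def, star_eq_conjTranspose] using this
  have hV1 : Vᴴ * V = 1 := by
    have := (Matrix.mem_unitaryGroup_iff').mp hJ.eigenvectorUnitary.2
    rwa [star_eq_conjTranspose] at this
  have hV2 : V * Vᴴ = 1 := by
    have := (Matrix.mem_unitaryGroup_iff).mp hJ.eigenvectorUnitary.2
    rwa [star_eq_conjTranspose] at this
  have hconj : ∀ t : ℂ, t • (1 : Matrix (Fin m) (Fin m) ℂ) - J
      = V * diagonal (fun k => t - (e k : ℂ)) * Vᴴ := by
    intro t
    have h1 : diagonal (fun k => t - (e k : ℂ))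
        = t • (1 : Matrix (Fin m) (Fin m) ℂ) - diagonal (fun k => (e k : ℂ)) := by
      ext i j
      by_cases h : i = j <;> simp [h, Matrix.one_apply]
    rw [h1, Matrix.mul_sub, Matrix.sub_mul, hV]
    congr 1
    rw [Matrix.mul_smul, Matrix.smul_mul, Matrix.mul_one, hV2]
  have hdetJ : ∀ t : ℂ, det (t • (1 : Matrix (Fin m) (Fin m) ℂ) - J)
      = ∏ k, (t - (e k : ℂ)) := by
    intro t
    rw [hconj, det_mul, det_mul, mul_comm, ← mul_assoc, ← det_mul, hV1, det_one, one_mul,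
      det_diagonal]
  -- spectrum of J
  have hspecJ : ∀ t : ℂ, t ∈ spectrum ℂ J ↔ ∃ k, t = (e k : ℂ) := by
    intro t
    rw [mem_spectrum_iff_det', hdetJ, Finset.prod_eq_zero_iff]
    constructor
    · rintro ⟨k, _, hk⟩; exact ⟨k, by linear_combination hk⟩
    · rintro ⟨k, hk⟩; exact ⟨k, Finset.mem_univ k, by linear_combination hk⟩
  have hrange : (Set.range fun k => ((e k : ℂ))) = Set.range fun j => ((μ j : ℂ)) := by
    rw [← hspec]
    ext t
    simp only [Set.mem_range]
    rw [hspecJ]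
    constructor
    · rintro ⟨k, hk⟩; exact ⟨k, hk.symm⟩
    · rintro ⟨k, hk⟩; exact ⟨k, hk.symm⟩
  -- permutation matching e and μ
  obtain ⟨σE, hσ⟩ : ∃ σ : Fin m ≃ Fin m, ∀ k, μ (σ k) = e k := by
    have hex : ∀ k, ∃ j, μ j = e k := by
      intro k
      have : ((e k : ℝ) : ℂ) ∈ Set.range fun j => ((μ j : ℂ)) := by
        rw [← hrange]; exact ⟨k, rfl⟩
      obtain ⟨j, hj⟩ := this
      exact ⟨j, by simpa using congrArg Complex.re hj⟩
    choose σ hσ using hex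
    have hex2 : ∀ j, ∃ k, e k = μ j := by
      intro j
      have : ((μ j : ℝ) : ℂ) ∈ Set.range fun k => ((e k : ℂ)) := by
        rw [hrange]; exact ⟨j, rfl⟩
      obtain ⟨k, hk⟩ := this
      exact ⟨k, by simpa using congrArg Complex.re hk⟩
    choose τ hτ using hex2
    have hsurj : Function.Surjective σ := by
      intro j
      exact ⟨τ j, hμ.injective (by rw [hσ, hτ])⟩
    exact ⟨Equiv.ofBijective σ hsurj.bijective_of_finite, fun k => hσ k⟩
  set w : Fin m → ℂ := Vᴴ *ᵥ u with hwdef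
  -- observability: w has no zero entry
  have hw : ∀ k, w k ≠ 0 := by
    intro k hwk
    set x : Fin m → ℂ := V *ᵥ Pi.single k 1 with hxdef
    have hVx : Vᴴ *ᵥ x = Pi.single k 1 := by
      rw [hxdef, mulVec_mulVec, hV1, one_mulVec]
    have hx0 : x ≠ 0 := by
      intro h
      have h1 : (0 : Fin m → ℂ) = Pi.single k 1 := by rw [← hVx, h, mulVec_zero]
      have h2 := congrFun h1 k
      simp at h2
    have hJx : ((e k : ℂ) • (1 : Matrix (Fin m) (Fin m) ℂ) - J) *ᵥ x = 0 := by
      have h1 : J *ᵥ x = (e k : ℂ) • x := by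
        rw [hV, ← mulVec_mulVec, hVx, ← mulVec_mulVec, diagonal_mulVec_single]
        funext i
        simp [hxdef, mulVec_single]
        ring
      rw [sub_mulVec, h1, smul_mulVec, one_mulVec, sub_self]
    have hux : star u ⬝ᵥ x = 0 := by
      have h1 : star u ⬝ᵥ x = star ((Vᴴ *ᵥ u) k) := by
        simp [hxdef, dotProduct, mulVec, conjTranspose_apply, Pi.single_apply,
          Finset.mul_sum, mul_comm]
      rw [h1]
      rw [hwdef] at hwk
      rw [hwk, star_zero]
    set M := Matrix.fromRows ((e k : ℂ) • (1 : Matrix (Fin m) (Fin m) ℂ) - J)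
        (Matrix.replicateRow Unit (star u)) with hMdef
    have hMx : M *ᵥ x = 0 := by
      rw [hMdef, fromRows_mulVec, hJx]
      funext i
      cases i with
      | inl i => simp
      | inr i => simpa [Matrix.mulVec, Matrix.replicateRow, dotProduct] using hux
    have hker : x ∈ LinearMap.ker M.mulVecLin := by
      simp [Matrix.mulVecLin_apply, hMx]
    have hrank := hobs (e k : ℂ)
    rw [← hMdef] at hrank
    have hrn := LinearMap.finrank_range_add_finrank_ker M.mulVecLin
    rw [Matrix.rank] at hrank
    have hfd : Module.finrank ℂ (Fin m → ℂ) = m := by simp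
    rw [hfd, hrank] at hrn
    have hbot : LinearMap.ker M.mulVecLin = ⊥ := by
      have h0 : Module.finrank ℂ (LinearMap.ker M.mulVecLin) = 0 := by omega
      exact Submodule.finrank_eq_zero.mp h0
    rw [hbot] at hker
    exact hx0 (by simpa using hker)
  -- weights
  set d : Fin m → ℝ := fun j => Complex.normSq (w (σE.symm j)) with hddef
  have hd : ∀ j, 0 < d j := fun j => Complex.normSq_pos.mpr (hw _)
  have hdσ : ∀ k, d (σE k) = Complex.normSq (w k) := by
    intro k; rw [hddef]; simp
  -- reindexing lemmas
  have hprodreindex : ∀ t : ℂ, (∏ k, (t - (e k : ℂ))) = ∏ j, (t - (μ j : ℂ)) := by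
    intro t
    rw [← Equiv.prod_comp σE (fun j => t - (μ j : ℂ))]
    exact Finset.prod_congr rfl fun k _ => by rw [hσ]
  have heraseimg : ∀ k : Fin m, (Finset.univ.erase k).image σE = Finset.univ.erase (σE k) := by
    intro k
    rw [Finset.image_erase σE.injective]
    congr 1
    exact Finset.image_univ_equiv σE
  have heraseprod : ∀ (t : ℂ) (k : Fin m),
      (∏ l ∈ Finset.univ.erase (σE k), (t - (μ l : ℂ)))
        = ∏ l ∈ Finset.univ.erase k, (t - (e l : ℂ)) := by
    intro t k
    rw [← heraseimg, Finset.prod_image (fun x _ y _ h => σE.injective h)]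
    exact Finset.prod_congr rfl fun l _ => by rw [hσ]
  -- the complex "characteristic function"
  set Gc : ℂ → ℂ := fun t => (t - (a : ℂ)) * ∏ j, (t - (μ j : ℂ))
      + ∑ j, (d j : ℂ) * ∏ l ∈ Finset.univ.erase j, (t - (μ l : ℂ)) with hGcdef
  have hsumreindex : ∀ t : ℂ,
      (∑ j, (d j : ℂ) * ∏ l ∈ Finset.univ.erase j, (t - (μ l : ℂ)))
        = ∑ k, (Complex.normSq (w k) : ℂ) * ∏ l ∈ Finset.univ.erase k, (t - (e l : ℂ)) := by
    intro t
    rw [← Equiv.sum_comp σE (fun j => (d j : ℂ) * ∏ l ∈ Finset.univ.erase j, (t - (μ l : ℂ)))]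
    exact Finset.sum_congr rfl fun k _ => by rw [hdσ, heraseprod]
  -- determinant of t•1 - A via block conjugation, for generic t
  have hFG : ∀ t : ℂ, det (t • (1 : Matrix (Fin m ⊕ Unit) (Fin m ⊕ Unit) ℂ) - A) = Gc t := by
    have hconjA : ∀ t : ℂ, det (t • (1 : Matrix (Fin m ⊕ Unit) (Fin m ⊕ Unit) ℂ) - A)
        = det (fromBlocks (diagonal (fun k => t - (e k : ℂ))) (replicateCol Unit (-w))
            (replicateRow Unit (star w)) (of fun _ _ => t - (a : ℂ))) := by
      intro t
      set W : Matrix (Fin m ⊕ Unit) (Fin m ⊕ Unit) ℂ :=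
        fromBlocks V 0 0 (1 : Matrix Unit Unit ℂ) with hWdef
      have hWW : Wᴴ * W = 1 := by
        rw [hWdef, fromBlocks_conjTranspose, fromBlocks_multiply]
        simp [hV1, fromBlocks_one]
      have hdetW : det Wᴴ * det W = 1 := by
        rw [← det_mul, hWW, det_one]
      have hsplit : t • (1 : Matrix (Fin m ⊕ Unit) (Fin m ⊕ Unit) ℂ) - A
          = fromBlocks (t • 1 - J) (-(replicateCol Unit u)) (replicateRow Unit (star u))
              (of fun _ _ => t - (a : ℂ)) := by
        rw [hA]
        ext i j
        rcases i with i | i <;> rcases j with j | j <;>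
          simp [Matrix.one_apply, Matrix.sub_apply, Matrix.smul_apply]
      rw [hsplit]
      have hconjM : fromBlocks (t • 1 - J) (-(replicateCol Unit u)) (replicateRow Unit (star u))
            (of fun _ _ => t - (a : ℂ))
          = W * fromBlocks (diagonal (fun k => t - (e k : ℂ))) (replicateCol Unit (-w))
              (replicateRow Unit (star w)) (of fun _ _ => t - (a : ℂ)) * Wᴴ := by
        have hdiagJ := hconj t
        rw [hWdef, fromBlocks_conjTranspose, fromBlocks_multiply, fromBlocks_multiply]
        simp only [Matrix.mul_zero, Matrix.zero_mul, add_zero, zero_add, Matrix.one_mul,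
          Matrix.mul_one, conjTranspose_zero, conjTranspose_one]
        have h2 : V * replicateCol Unit (-w) = -replicateCol Unit u := by
          rw [← replicateCol_mulVec, hwdef, mulVec_neg, mulVec_mulVec, hV2, one_mulVec]
          ext i j; simp
        have h3 : replicateRow Unit (star w) * Vᴴ = replicateRow Unit (star u) := by
          rw [← replicateRow_vecMul]
          congr 1
          have h4 : star w ᵥ* Vᴴ = star (V *ᵥ w) := (star_mulVec V w).symm
          rw [h4, hwdef, mulVec_mulVec, hV2, one_mulVec]
        rw [← hdiagJ, h2, h3]
      rw [hconjM, det_mul, det_mul]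
      have hc : det W * det (fromBlocks (diagonal (fun k => t - (e k : ℂ))) (replicateCol Unit (-w))
          (replicateRow Unit (star w)) (of fun _ _ => t - (a : ℂ))) * det Wᴴ
          = (det Wᴴ * det W) * det (fromBlocks (diagonal (fun k => t - (e k : ℂ))) (replicateCol Unit (-w))
          (replicateRow Unit (star w)) (of fun _ _ => t - (a : ℂ))) := by ring
      rw [hc, hdetW, one_mul]
    -- for t avoiding the eigenvalues, compute explicitly
    have hgen : ∀ t : ℂ, (∀ k, t ≠ (e k : ℂ)) →
        det (t • (1 : Matrix (Fin m ⊕ Unit) (Fin m ⊕ Unit) ℂ) - A) = Gc t := by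
      intro t ht
      rw [hconjA t, det_bordered_diag' w _ _ (fun k => sub_ne_zero.mpr (ht k)), hGcdef]
      simp only
      rw [hprodreindex, hsumreindex]
    -- extend by continuity
    have hFcont : Continuous fun t : ℂ =>
        det (t • (1 : Matrix (Fin m ⊕ Unit) (Fin m ⊕ Unit) ℂ) - A) := by
      apply Continuous.matrix_det
      exact (continuous_id.smul continuous_const).sub continuous_const
    have hGcont : Continuous Gc := by
      rw [hGcdef]
      apply Continuous.add
      · exact (continuous_id.sub continuous_const).mul
          (continuous_finset_prod _ fun j _ => continuous_id.sub continuous_const)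
      · exact continuous_finset_sum _ fun j _ =>
          continuous_const.mul (continuous_finset_prod _ fun l _ => continuous_id.sub continuous_const)
    have hdense : Dense {t : ℂ | ∀ k, t ≠ (e k : ℂ)} := by
      have hfin : (Set.range fun k => ((e k : ℂ))).Countable :=
        (Set.finite_range _).countable
      have := hfin.dense_compl ℂ
      convert this using 1
      ext t
      simp [Set.mem_compl_iff, Set.mem_range, not_exists, eq_comm]
    have := Continuous.ext_on hdense hFcont hGcont (fun t ht => hgen t ht)
    exact fun t => congrFun this t
  -- spectrum of A via Gc
  have hspecA : ∀ t : ℂ, t ∈ spectrum ℂ A ↔ Gc t = 0 := by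
    intro t
    rw [mem_spectrum_iff_det', hFG]
  -- Part 1
  have part1 : ∀ t : ℝ, (t : ℂ) ∈ spectrum ℂ A ↔
      ((t : ℂ) ∉ spectrum ℂ J ∧
        (t : ℂ) - (a : ℂ) =
          -(star u ⬝ᵥ (((t : ℂ) • (1 : Matrix (Fin m) (Fin m) ℂ) - J)⁻¹ *ᵥ u))) := by
    intro t
    by_cases htin : ∃ j, t = μ j
    · -- t is an eigenvalue of J : not an eigenvalue of A, RHS false
      obtain ⟨j, hj⟩ := htin
      have htJ : (t : ℂ) ∈ spectrum ℂ J := by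
        rw [hspec]; exact ⟨j, by rw [hj]⟩
      have hGcne : Gc (t : ℂ) ≠ 0 := by
        rw [hGcdef]
        simp only
        have hz : ((t : ℂ) - (μ j : ℂ)) = 0 := by rw [hj]; ring
        have h1 : ((t : ℂ) - (a : ℂ)) * ∏ l, ((t : ℂ) - (μ l : ℂ)) = 0 := by
          rw [Finset.prod_eq_zero (Finset.mem_univ j) hz, mul_zero]
        rw [h1, zero_add]
        have h2 : (∑ i, (d i : ℂ) * ∏ l ∈ Finset.univ.erase i, ((t : ℂ) - (μ l : ℂ)))
            = (d j : ℂ) * ∏ l ∈ Finset.univ.erase j, ((t : ℂ) - (μ l : ℂ)) := by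
          apply Finset.sum_eq_single
          · intro i _ hij
            rw [Finset.prod_eq_zero (Finset.mem_erase.mpr ⟨Ne.symm hij, Finset.mem_univ j⟩) hz,
              mul_zero]
          · intro h; exact absurd (Finset.mem_univ j) h
        rw [h2]
        apply mul_ne_zero
        · exact_mod_cast (hd j).ne'
        · apply Finset.prod_ne_zero_iff.mpr
          intro l hl
          rw [hj, sub_ne_zero]
          intro hc
          have : μ j = μ l := by exact_mod_cast hc
          exact (Finset.mem_erase.mp hl).1 (hμ.injective this.symm)
      constructor
      · intro h
        exact absurd ((hspecA _).mp h) hGcne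
      · rintro ⟨h1, _⟩
        exact absurd htJ h1
    · -- t is not an eigenvalue of J
      push_neg at htin
      have htne : ∀ j, (t : ℂ) ≠ (μ j : ℂ) := by
        intro j hc
        exact htin j (by exact_mod_cast hc)
      have htnee : ∀ k, (t : ℂ) ≠ (e k : ℂ) := by
        intro k hc
        have : ((e k : ℂ)) ∈ Set.range fun j => ((μ j : ℂ)) := by
          rw [← hrange]; exact ⟨k, rfl⟩
        obtain ⟨j, hj⟩ := this
        exact htne j (by rw [hc]; exact hj.symm)
      have htJ : (t : ℂ) ∉ spectrum ℂ J := by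
        rw [hspec]
        rintro ⟨j, hj⟩
        exact htne j hj.symm
      -- compute the resolvent quadratic form
      have hresolv : star u ⬝ᵥ (((t : ℂ) • (1 : Matrix (Fin m) (Fin m) ℂ) - J)⁻¹ *ᵥ u)
          = ∑ j, (d j : ℂ) * ((t : ℂ) - (μ j : ℂ))⁻¹ := by
        have hvne : ∀ k, (t : ℂ) - (e k : ℂ) ≠ 0 := fun k => sub_ne_zero.mpr (htnee k)
        have hinv : (((t : ℂ) • (1 : Matrix (Fin m) (Fin m) ℂ) - J))⁻¹
            = V * diagonal (fun k => ((t : ℂ) - (e k : ℂ))⁻¹) * Vᴴ := by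
          apply inv_eq_right_inv
          rw [hconj]
          have : (V * diagonal (fun k => (t : ℂ) - (e k : ℂ)) * Vᴴ)
              * (V * diagonal (fun k => ((t : ℂ) - (e k : ℂ))⁻¹) * Vᴴ)
              = V * (diagonal (fun k => (t : ℂ) - (e k : ℂ))
                * diagonal (fun k => ((t : ℂ) - (e k : ℂ))⁻¹)) * Vᴴ := by
            simp only [Matrix.mul_assoc]
            congr 1
            congr 1
            rw [← Matrix.mul_assoc, hV1, Matrix.one_mul]
          rw [this, diagonal_mul_diagonal]
          have h5 : (fun k => ((t : ℂ) - (e k : ℂ)) * ((t : ℂ) - (e k : ℂ))⁻¹)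
              = fun _ : Fin m => (1 : ℂ) := funext fun k => mul_inv_cancel₀ (hvne k)
          rw [h5, diagonal_one, Matrix.mul_one, hV2]
        rw [hinv]
        have h6 : (V * diagonal (fun k => ((t : ℂ) - (e k : ℂ))⁻¹) * Vᴴ) *ᵥ u
            = V *ᵥ (diagonal (fun k => ((t : ℂ) - (e k : ℂ))⁻¹) *ᵥ w) := by
          rw [hwdef, ← mulVec_mulVec, ← mulVec_mulVec]
        have h7 : star w = star u ᵥ* V := by
          rw [hwdef, star_mulVec, conjTranspose_conjTranspose]
        rw [h6, dotProduct_mulVec, ← h7]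
        have h8 : star w ⬝ᵥ (diagonal (fun k => ((t : ℂ) - (e k : ℂ))⁻¹) *ᵥ w)
            = ∑ k, (Complex.normSq (w k) : ℂ) * ((t : ℂ) - (e k : ℂ))⁻¹ := by
          rw [dotProduct]
          refine Finset.sum_congr rfl fun k _ => ?_
          simp [mulVec_diagonal, Pi.star_apply, Complex.normSq_eq_conj_mul_self]
          ring
        rw [h8, ← Equiv.sum_comp σE (fun j => (d j : ℂ) * ((t : ℂ) - (μ j : ℂ))⁻¹)]
        refine Finset.sum_congr rfl fun k _ => ?_
        rw [hdσ, hσ]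
      -- algebraic equivalence
      have hQne : (∏ j, ((t : ℂ) - (μ j : ℂ))) ≠ 0 :=
        Finset.prod_ne_zero_iff.mpr fun j _ => sub_ne_zero.mpr (htne j)
      have hGcfact : Gc (t : ℂ) = (∏ j, ((t : ℂ) - (μ j : ℂ)))
          * (((t : ℂ) - (a : ℂ)) + ∑ j, (d j : ℂ) * ((t : ℂ) - (μ j : ℂ))⁻¹) := by
        rw [hGcdef]
        simp only
        rw [mul_add, Finset.mul_sum]
        congr 1
        · ring
        · refine Finset.sum_congr rfl fun j _ => ?_
          have h1 : (∏ l, ((t : ℂ) - (μ l : ℂ)))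
              = ((t : ℂ) - (μ j : ℂ)) * ∏ l ∈ Finset.univ.erase j, ((t : ℂ) - (μ l : ℂ)) :=
            (Finset.mul_prod_erase _ _ (Finset.mem_univ j)).symm
          rw [h1]
          field_simp [sub_ne_zero.mpr (htne j)]
      rw [hspecA, hresolv, hGcfact, mul_eq_zero]
      constructor
      · rintro (hc | hc)
        · exact absurd hc hQne
        · exact ⟨htJ, by linear_combination hc⟩
      · rintro ⟨_, hc⟩
        right
        linear_combination hc
  refine ⟨part1, ?_⟩
  -- Part 2: every gap contains a real eigenvalue of A
  set P : ℝ → ℝ := fun t => (t - a) * ∏ j, (t - μ j)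
      + ∑ j, d j * ∏ l ∈ Finset.univ.erase j, (t - μ l) with hPdef
  have hPGc : ∀ t : ℝ, Gc (t : ℂ) = ((P t : ℝ) : ℂ) := by
    intro t
    rw [hGcdef, hPdef]
    push_cast
    ring
  have hPcont : Continuous P := by
    rw [hPdef]
    apply Continuous.add
    · exact (continuous_id.sub continuous_const).mul
        (continuous_finset_prod _ fun j _ => continuous_id.sub continuous_const)
    · exact continuous_finset_sum _ fun j _ => continuous_const.mul
        (continuous_finset_prod _ fun l _ => continuous_id.sub continuous_const)
  have hPspec : ∀ t : ℝ, P t = 0 → (t : ℂ) ∈ spectrum ℂ A := by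
    intro t ht
    rw [hspecA, hPGc, ht]
    exact Complex.ofReal_zero
  have hPmu : ∀ j : Fin m, P (μ j) = d j * ∏ l ∈ Finset.univ.erase j, (μ j - μ l) := by
    intro j
    rw [hPdef]
    simp only
    have hz : μ j - μ j = 0 := sub_self _
    rw [Finset.prod_eq_zero (Finset.mem_univ j) hz, mul_zero, zero_add]
    apply Finset.sum_eq_single
    · intro i _ hij
      rw [Finset.prod_eq_zero (Finset.mem_erase.mpr ⟨Ne.symm hij, Finset.mem_univ j⟩) hz,
        mul_zero]
    · intro h; exact absurd (Finset.mem_univ j) h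
  have hsign : ∀ j : Fin m, 0 < (-1 : ℝ) ^ (j : ℕ) * P (μ j) := by
    intro j
    rw [hPmu]
    have hsplit : Finset.univ.erase j = Finset.Iio j ∪ Finset.Ioi j := by
      ext l
      simp only [Finset.mem_erase, Finset.mem_univ, and_true, Finset.mem_union,
        Finset.mem_Iio, Finset.mem_Ioi]
      exact ne_iff_lt_or_gt
    have hdisj : Disjoint (Finset.Iio j) (Finset.Ioi j) := by
      rw [Finset.disjoint_left]
      intro l h1 h2
      exact absurd (Finset.mem_Ioi.mp h2) (not_lt.mpr (le_of_lt (Finset.mem_Iio.mp h1)))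
    rw [hsplit, Finset.prod_union hdisj]
    have hneg : (∏ l ∈ Finset.Iio j, (μ j - μ l))
        = (-1 : ℝ) ^ (j : ℕ) * ∏ l ∈ Finset.Iio j, (μ l - μ j) := by
      have h1 : ∀ l ∈ Finset.Iio j, (μ j - μ l) = (-1) * (μ l - μ j) := by
        intro l _; ring
      rw [Finset.prod_congr rfl h1, Finset.prod_mul_distrib, Finset.prod_const, Fin.card_Iio]
    rw [hneg]
    have hX : 0 < ∏ l ∈ Finset.Iio j, (μ l - μ j) :=
      Finset.prod_pos fun l hl => sub_pos.mpr (hμ (Finset.mem_Iio.mp hl))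
    have hY : 0 < ∏ l ∈ Finset.Ioi j, (μ j - μ l) :=
      Finset.prod_pos fun l hl => sub_pos.mpr (hμ (Finset.mem_Ioi.mp hl))
    have hee : (-1 : ℝ) ^ (j : ℕ) * (-1) ^ (j : ℕ) = 1 := by
      rw [← pow_add]
      exact Even.neg_one_pow ⟨(j : ℕ), rfl⟩
    have hc : (-1 : ℝ) ^ (j : ℕ) * (d j * (((-1 : ℝ) ^ (j : ℕ)
          * ∏ l ∈ Finset.Iio j, (μ l - μ j)) * ∏ l ∈ Finset.Ioi j, (μ j - μ l)))
        = ((-1 : ℝ) ^ (j : ℕ) * (-1) ^ (j : ℕ)) * (d j * ((∏ l ∈ Finset.Iio j, (μ l - μ j))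
          * ∏ l ∈ Finset.Ioi j, (μ j - μ l))) := by ring
    rw [hc, hee, one_mul]
    exact mul_pos (hd j) (mul_pos hX hY)
  have hint : ∀ (j : ℕ) (hj : j + 1 < m), ∃ t : ℝ, μ ⟨j + 1, hj⟩ < t ∧
      t < μ ⟨j, Nat.lt_of_succ_lt hj⟩ ∧ (t : ℂ) ∈ spectrum ℂ A := by
    intro j hj
    set j0 : Fin m := ⟨j, Nat.lt_of_succ_lt hj⟩ with hj0def
    set j1 : Fin m := ⟨j + 1, hj⟩ with hj1def
    have hlt : μ j1 < μ j0 := hμ (by rw [hj0def, hj1def, Fin.lt_def]; exact Nat.lt_succ_self j)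
    have hs0 := hsign j0
    have hs1 := hsign j1
    rcases Nat.even_or_odd j with he | ho
    · have h0 : 0 < P (μ j0) := by
        rwa [show ((j0 : ℕ)) = j from rfl, he.neg_one_pow, one_mul] at hs0
      have h1 : P (μ j1) < 0 := by
        rw [show ((j1 : ℕ)) = j + 1 from rfl, Odd.neg_one_pow he.add_one, neg_one_mul] at hs1
        linarith
      obtain ⟨t, htmem, htP⟩ :=
        intermediate_value_Ioo hlt.le hPcont.continuousOn ⟨h1, h0⟩
      exact ⟨t, htmem.1, htmem.2, hPspec t htP⟩
    · have h0 : P (μ j0) < 0 := by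
        rw [show ((j0 : ℕ)) = j from rfl, ho.neg_one_pow, neg_one_mul] at hs0
        linarith
      have h1 : 0 < P (μ j1) := by
        rwa [show ((j1 : ℕ)) = j + 1 from rfl, Even.neg_one_pow ho.add_one, one_mul] at hs1
      obtain ⟨t, htmem, htP⟩ :=
        intermediate_value_Ioo' hlt.le hPcont.continuousOn ⟨h0, h1⟩
      exact ⟨t, htmem.1, htmem.2, hPspec t htP⟩
  have hempty : {j : ℕ | ∃ hj : j + 1 < m,
      ¬∃ t : ℝ, μ ⟨j + 1, hj⟩ < t ∧ t < μ ⟨j, Nat.lt_of_succ_lt hj⟩ ∧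
        (t : ℂ) ∈ spectrum ℂ A} = ∅ := by
    ext j
    simp only [Set.mem_setOf_eq, Set.mem_empty_iff_false, iff_false]
    rintro ⟨hj, hno⟩
    exact hno (hint j hj)
  rw [hempty]
  simp
end

section
/- The n×n block matrix A = [[J, u], [−u*, a]] with J Hermitian, u ∈ ℂ^{n-1}, a ∈ ℝ has at most one pair of non-real eigenvalues, and non-real eigenvalues occur in a conjugate pair λ, λ̄. -/
open Matrix Polynomial

lemma aux_charmatrix_sub_smul_one {n R : Type*} [Fintype n] [DecidableEq n] [CommRing R]
    (M : Matrix n n R) (μ : R) :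
    charmatrix (M - μ • 1) = (charmatrix M).map (eval₂RingHom C (X + C μ)) := by
  ext i j
  by_cases h : i = j
  · subst h
    simp [Matrix.sub_apply, Matrix.smul_apply, Matrix.one_apply, map_sub, sub_sub_eq_add_sub,
      add_comm]
  · simp [charmatrix_apply_ne _ _ _ h, Matrix.sub_apply, Matrix.smul_apply, Matrix.one_apply_ne h]

lemma aux_charpoly_sub_smul_one {n R : Type*} [Fintype n] [DecidableEq n] [CommRing R]
    (M : Matrix n n R) (μ : R) :
    (M - μ • 1).charpoly = M.charpoly.comp (X + C μ) := by
  rw [Matrix.charpoly, aux_charmatrix_sub_smul_one,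
    show M.charmatrix.map ⇑(eval₂RingHom C (X + C μ))
      = (eval₂RingHom C (X + C μ)).mapMatrix M.charmatrix from rfl,
    ← RingHom.map_det]
  rfl

lemma aux_charpoly_transpose {n R : Type*} [Fintype n] [DecidableEq n] [CommRing R]
    (M : Matrix n n R) : (Mᵀ).charpoly = M.charpoly := by
  have h : charmatrix (Mᵀ) = (charmatrix M)ᵀ := by
    ext i j
    by_cases h : i = j
    · subst h; simp
    · simp [charmatrix_apply_ne _ _ _ h, charmatrix_apply_ne _ _ _ (Ne.symm h)]
  rw [Matrix.charpoly, h, Matrix.det_transpose, Matrix.charpoly]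

lemma aux_charpoly_conj {n R : Type*} [Fintype n] [DecidableEq n] [CommRing R]
    (M H : Matrix n n R) (hH : H * H = 1) : (H * M * H).charpoly = M.charpoly := by
  have hHC : (H.map C) * (H.map C) = 1 := by
    rw [← Matrix.map_mul, hH, Matrix.map_one _ (map_zero C) (map_one C)]
  have key : charmatrix (H * M * H) = (H.map C) * charmatrix M * (H.map C) := by
    have hscalar : (H.map C) * Matrix.scalar n (X : R[X]) =
        Matrix.scalar n (X : R[X]) * (H.map C) :=
      (Matrix.scalar_commute X (fun r => Commute.all _ _) (H.map C)).symm
    simp only [charmatrix, Matrix.mul_sub, Matrix.sub_mul]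
    congr 1
    · rw [hscalar, Matrix.mul_assoc, hHC, Matrix.mul_one]
    · simp only [RingHom.mapMatrix_apply, Matrix.map_mul]
  rw [Matrix.charpoly, key, Matrix.det_mul, Matrix.det_mul, mul_comm, ← mul_assoc,
    ← Matrix.det_mul, hHC, Matrix.det_one, one_mul, Matrix.charpoly]


open Matrix Polynomial Module

lemma aux_finrank_maxGenEigenspace {K V : Type*} [Field K] [AddCommGroup V] [Module K V]
    [Module.Finite K V] (φ : Module.End K V) (μ : K) :
    Module.finrank K (φ.maxGenEigenspace μ) = φ.charpoly.rootMultiplicity μ := by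
  set ψ : Module.End K V := φ - μ • 1 with hψ
  have hspace : φ.maxGenEigenspace μ = ψ.maxGenEigenspace 0 := by
    ext x
    simp [Module.End.mem_maxGenEigenspace, hψ]
  have hcp : ψ.charpoly = φ.charpoly.comp (X + C μ) := by
    classical
    let b := Module.Free.chooseBasis K V
    rw [← LinearMap.charpoly_toMatrix ψ b, ← LinearMap.charpoly_toMatrix φ b]
    have : LinearMap.toMatrix b b ψ = LinearMap.toMatrix b b φ - μ • 1 := by
      rw [hψ]
      simp [map_sub, _root_.map_smul]
    rw [this, aux_charpoly_sub_smul_one]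
  rw [hspace, LinearMap.finrank_maxGenEigenspace_zero_eq, hcp,
    Polynomial.rootMultiplicity_eq_natTrailingDegree]
open Matrix Polynomial

lemma aux_adj {n : Type*} [Fintype n] [DecidableEq n] (A H : Matrix n n ℂ) (hAH : Aᴴ * H = H * A)
    (x y : n → ℂ) : star x ⬝ᵥ (H *ᵥ (A *ᵥ y)) = star (A *ᵥ x) ⬝ᵥ (H *ᵥ y) := by
  rw [star_mulVec, ← dotProduct_mulVec]
  simp only [Matrix.mulVec_mulVec]
  rw [hAH]

lemma aux_key {n : Type*} [Fintype n] [DecidableEq n] (A H : Matrix n n ℂ) (hAH : Aᴴ * H = H * A)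
    (α β : ℂ) (x y : n → ℂ) :
    star x ⬝ᵥ (H *ᵥ (((A - β • 1)) *ᵥ y)) - star ((A - α • 1) *ᵥ x) ⬝ᵥ (H *ᵥ y)
      = ((starRingEnd ℂ) α - β) * (star x ⬝ᵥ (H *ᵥ y)) := by
  have h1 : (A - β • 1) *ᵥ y = A *ᵥ y - β • y := by
    rw [Matrix.sub_mulVec, Matrix.smul_mulVec, Matrix.one_mulVec]
  have h2 : (A - α • 1) *ᵥ x = A *ᵥ x - α • x := by
    rw [Matrix.sub_mulVec, Matrix.smul_mulVec, Matrix.one_mulVec]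
  rw [h1, h2, Matrix.mulVec_sub, Matrix.mulVec_smul, dotProduct_sub, star_sub, sub_dotProduct,
    star_smul, smul_dotProduct, dotProduct_smul, aux_adj A H hAH x y]
  simp only [starRingEnd_apply, smul_eq_mul]
  ring

lemma aux_orth {n : Type*} [Fintype n] [DecidableEq n] (A H : Matrix n n ℂ) (hAH : Aᴴ * H = H * A)
    (α β : ℂ) (hαβ : (starRingEnd ℂ) α ≠ β) :
    ∀ k l : ℕ, ∀ x y : n → ℂ, ((A - α • 1) ^ k) *ᵥ x = 0 → ((A - β • 1) ^ l) *ᵥ y = 0 →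
      star x ⬝ᵥ (H *ᵥ y) = 0 := by
  intro k
  induction k with
  | zero =>
    intro l x y hx hy
    rw [pow_zero, Matrix.one_mulVec] at hx
    simp [hx]
  | succ k ihk =>
    intro l
    induction l with
    | zero =>
      intro x y hx hy
      rw [pow_zero, Matrix.one_mulVec] at hy
      simp [hy]
    | succ l ihl =>
      intro x y hx hy
      have h1 : ((A - β • 1) ^ l) *ᵥ ((A - β • 1) *ᵥ y) = 0 := by
        rw [Matrix.mulVec_mulVec, ← pow_succ]; exact hy
      have h2 : ((A - α • 1) ^ k) *ᵥ ((A - α • 1) *ᵥ x) = 0 := by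
        rw [Matrix.mulVec_mulVec, ← pow_succ]; exact hx
      have e1 : star x ⬝ᵥ (H *ᵥ ((A - β • 1) *ᵥ y)) = 0 := ihl x ((A - β • 1) *ᵥ y) hx h1
      have e2 : star ((A - α • 1) *ᵥ x) ⬝ᵥ (H *ᵥ y) = 0 := ihk (l + 1) ((A - α • 1) *ᵥ x) y h2 hy
      have := aux_key A H hAH α β x y
      rw [e1, e2, sub_zero] at this
      have h0 := this.symm
      rcases mul_eq_zero.mp h0 with h | h
      · exact absurd (sub_eq_zero.mp h) hαβ
      · exact h
open Matrix Polynomial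

lemma aux_form {m : ℕ} (z : Fin m ⊕ Unit → ℂ) :
    star z ⬝ᵥ ((fromBlocks (1 : Matrix (Fin m) (Fin m) ℂ) 0 0 (-1 : Matrix Unit Unit ℂ)) *ᵥ z)
      = ((∑ i : Fin m, Complex.normSq (z (Sum.inl i)) : ℝ) : ℂ)
        - ((Complex.normSq (z (Sum.inr ())) : ℝ) : ℂ) := by
  have hH : (fromBlocks (1 : Matrix (Fin m) (Fin m) ℂ) 0 0 (-1 : Matrix Unit Unit ℂ))
      = diagonal (Sum.elim (fun _ => (1:ℂ)) (fun _ => -1)) := by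
    ext i j
    rcases i with i | i <;> rcases j with j | j <;>
      simp [Matrix.fromBlocks, Matrix.diagonal_apply, Matrix.one_apply]
  rw [hH]
  simp only [dotProduct, Matrix.mulVec_diagonal, Fintype.sum_sum_type, Sum.elim_inl, Sum.elim_inr,
    one_mul, neg_one_mul, Pi.star_apply, Finset.univ_unique, Finset.sum_singleton]
  push_cast
  rw [sub_eq_add_neg]
  congr 1
  · exact Finset.sum_congr rfl fun i _ => by
      rw [RCLike.star_def, Complex.normSq_eq_conj_mul_self]
  · rw [RCLike.star_def, mul_neg, Complex.normSq_eq_conj_mul_self]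

lemma aux_zero {m : ℕ} (z : Fin m ⊕ Unit → ℂ)
    (h : star z ⬝ᵥ ((fromBlocks (1 : Matrix (Fin m) (Fin m) ℂ) 0 0 (-1 : Matrix Unit Unit ℂ)) *ᵥ z) = 0)
    (hz : z (Sum.inr ()) = 0) : z = 0 := by
  rw [aux_form, hz] at h
  simp only [map_zero, Complex.ofReal_zero, sub_zero, Complex.ofReal_eq_zero] at h
  have hall := (Finset.sum_eq_zero_iff_of_nonneg
    (fun i _ => Complex.normSq_nonneg (z (Sum.inl i)))).mp h
  funext i
  rcases i with i | u
  · exact Complex.normSq_eq_zero.mp (hall i (Finset.mem_univ i))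
  · cases u; exact hz
open Matrix Polynomial

lemma aux_contra {m : ℕ} (A : Matrix (Fin m ⊕ Unit) (Fin m ⊕ Unit) ℂ)
    (hAH : Aᴴ * (fromBlocks (1 : Matrix (Fin m) (Fin m) ℂ) 0 0 (-1 : Matrix Unit Unit ℂ))
      = (fromBlocks (1 : Matrix (Fin m) (Fin m) ℂ) 0 0 (-1 : Matrix Unit Unit ℂ)) * A)
    (α β : ℂ) (hα : (starRingEnd ℂ) α ≠ α) (hβ : (starRingEnd ℂ) β ≠ β)
    (hαβ : (starRingEnd ℂ) α ≠ β) (hβα : (starRingEnd ℂ) β ≠ α)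
    (x y : Fin m ⊕ Unit → ℂ) (kx ky : ℕ)
    (hx : ((A - α • 1) ^ kx) *ᵥ x = 0) (hy : ((A - β • 1) ^ ky) *ᵥ y = 0)
    (hx0 : x ≠ 0)
    (hind : ∀ c d : ℂ, c • x + d • y = 0 → c = 0 ∧ d = 0) : False := by
  set H : Matrix (Fin m ⊕ Unit) (Fin m ⊕ Unit) ℂ :=
    fromBlocks 1 0 0 (-1) with hHdef
  have hBxx : star x ⬝ᵥ (H *ᵥ x) = 0 := aux_orth A H hAH α α hα kx kx x x hx hx
  have hBxy : star x ⬝ᵥ (H *ᵥ y) = 0 := aux_orth A H hAH α β hαβ kx ky x y hx hy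
  have hByx : star y ⬝ᵥ (H *ᵥ x) = 0 := aux_orth A H hAH β α hβα ky kx y x hy hx
  have hByy : star y ⬝ᵥ (H *ᵥ y) = 0 := aux_orth A H hAH β β hβ ky ky y y hy hy
  set c : ℂ := y (Sum.inr ()) with hc
  set d : ℂ := -(x (Sum.inr ())) with hd
  set z : Fin m ⊕ Unit → ℂ := c • x + d • y with hzdef
  have hze : z (Sum.inr ()) = 0 := by
    simp only [hzdef, Pi.add_apply, Pi.smul_apply, smul_eq_mul, hc, hd]
    ring
  have hBzz : star z ⬝ᵥ (H *ᵥ z) = 0 := by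
    simp only [hzdef, star_add, star_smul, Matrix.mulVec_add, Matrix.mulVec_smul,
      dotProduct_add, add_dotProduct, smul_dotProduct, dotProduct_smul,
      hBxx, hBxy, hByx, hByy, smul_eq_mul, mul_zero, add_zero, smul_zero]
  have hz0 : z = 0 := aux_zero z hBzz hze
  obtain ⟨hc0, hd0⟩ := hind c d hz0
  have hxe : x (Sum.inr ()) = 0 := by
    have := hd0
    rw [hd, neg_eq_zero] at this
    exact this
  exact hx0 (aux_zero x hBxx hxe)
open Matrix Polynomial

set_option maxHeartbeats 1000000

/-- The matrix `A = [[J, u], [-u*, a]]` with `J` Hermitian and `a` real has at most one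
pair of non-real eigenvalues (counted with multiplicity in the characteristic
polynomial), and its non-real eigenvalues occur in a conjugate pair `λ, λ̄`. -/
theorem stmt_14 {m : ℕ} (J : Matrix (Fin m) (Fin m) ℂ) (hJ : J.IsHermitian)
    (u : Fin m → ℂ) (a : ℝ) :
    let A : Matrix (Fin m ⊕ Unit) (Fin m ⊕ Unit) ℂ :=
      Matrix.fromBlocks J (Matrix.replicateCol Unit u) (-(Matrix.replicateRow Unit (star u)))
        (Matrix.of fun _ _ => (a : ℂ))
    ((A.charpoly.roots).filter (fun z => z.im ≠ 0)).card ≤ 2 ∧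
      ∀ z ∈ A.charpoly.roots, z.im ≠ 0 → (starRingEnd ℂ) z ∈ A.charpoly.roots := by
  intro A
  set H : Matrix (Fin m ⊕ Unit) (Fin m ⊕ Unit) ℂ := fromBlocks 1 0 0 (-1) with hHdef
  -- basic facts about A and H
  have hAconj : Aᴴ = Matrix.fromBlocks J (-(Matrix.replicateCol Unit u)) (Matrix.replicateRow Unit (star u))
      (Matrix.of fun _ _ => (a : ℂ)) := by
    show (Matrix.fromBlocks J (Matrix.replicateCol Unit u) (-(Matrix.replicateRow Unit (star u)))
        (Matrix.of fun _ _ => (a : ℂ)))ᴴ = _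
    have hblock : (Matrix.of (fun _ _ => (a:ℂ)) : Matrix Unit Unit ℂ)ᴴ
        = Matrix.of (fun _ _ => (a:ℂ)) := by
      ext i j
      simp [Matrix.conjTranspose_apply]
    rw [Matrix.fromBlocks_conjTranspose, hJ.eq, Matrix.conjTranspose_neg,
      Matrix.conjTranspose_replicateRow, Matrix.conjTranspose_replicateCol, star_star, hblock]
  have hAH : Aᴴ * H = H * A := by
    rw [hAconj, hHdef]
    show _ = _ * Matrix.fromBlocks J (Matrix.replicateCol Unit u) (-(Matrix.replicateRow Unit (star u)))
        (Matrix.of fun _ _ => (a : ℂ))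
    simp [Matrix.fromBlocks_multiply]
  have hHH : H * H = 1 := by
    rw [hHdef, ← Matrix.fromBlocks_one]
    simp [Matrix.fromBlocks_multiply]
  have hAHH : Aᴴ = H * A * H := by
    rw [← hAH, Matrix.mul_assoc, hHH, Matrix.mul_one]
  -- the characteristic polynomial has real coefficients
  have hreal : A.charpoly.map (starRingEnd ℂ) = A.charpoly := by
    rw [← Matrix.charpoly_map]
    have hmapA : A.map (starRingEnd ℂ) = (Aᴴ)ᵀ := by
      rw [Matrix.conjTranspose, Matrix.transpose_map, Matrix.transpose_transpose]
      rfl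
    rw [hmapA, aux_charpoly_transpose, hAHH, aux_charpoly_conj _ _ hHH]
  have hp0 : A.charpoly ≠ 0 := A.charpoly_monic.ne_zero
  -- conjugation of roots
  have hconj : ∀ z ∈ A.charpoly.roots, z.im ≠ 0 → (starRingEnd ℂ) z ∈ A.charpoly.roots := by
    intro z hz _
    rw [Polynomial.mem_roots hp0] at hz ⊢
    have := hz.map (f := starRingEnd ℂ)
    rwa [hreal] at this
  refine ⟨?_, hconj⟩
  -- the linear endomorphism attached to A
  set φ : Module.End ℂ (Fin m ⊕ Unit → ℂ) := Matrix.toLinAlgEquiv' A with hφdef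
  have hφcp : φ.charpoly = A.charpoly := by
    rw [← LinearMap.charpoly_toMatrix φ (Pi.basisFun ℂ (Fin m ⊕ Unit)),
      LinearMap.toMatrix_eq_toMatrix']
    congr 1
    exact LinearMap.toMatrix'_toLin' A
  have hmem : ∀ (μ : ℂ) (v : Fin m ⊕ Unit → ℂ), v ∈ φ.maxGenEigenspace μ ↔
      ∃ k : ℕ, ((A - μ • 1) ^ k) *ᵥ v = 0 := by
    intro μ v
    rw [Module.End.mem_maxGenEigenspace]
    have key : ∀ k : ℕ, ((φ - μ • 1) ^ k) v = ((A - μ • 1) ^ k) *ᵥ v := by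
      intro k
      have h1 : φ - μ • 1 = Matrix.toLinAlgEquiv' (A - μ • 1) := by
        rw [map_sub, hφdef]
        congr 1
        rw [_root_.map_smul, _root_.map_one]
      rw [h1, ← map_pow]
      exact Matrix.toLinAlgEquiv'_apply _ v
    simp_rw [key]
  have hmult : ∀ μ : ℂ, A.charpoly.roots.count μ =
      Module.finrank ℂ (φ.maxGenEigenspace μ) := by
    intro μ
    rw [Polynomial.count_roots, aux_finrank_maxGenEigenspace φ μ, hφcp]
  -- main argument
  by_contra hT
  push_neg at hT
  set T := A.charpoly.roots.filter (fun z => z.im ≠ 0) with hTdef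
  have hT3 : 3 ≤ T.card := hT
  have him : ∀ z ∈ T, z.im ≠ 0 := fun z hz => (Multiset.mem_filter.mp hz).2
  have hTsub : ∀ z ∈ T, z ∈ A.charpoly.roots := fun z hz => (Multiset.mem_filter.mp hz).1
  -- we find suitable α, β and apply aux_contra
  by_cases hcase : ∃ lam ∈ T, 2 ≤ T.count lam
  · -- a repeated non-real root
    obtain ⟨lam, hlamT, h2⟩ := hcase
    have hlam : (starRingEnd ℂ) lam ≠ lam := fun h => him lam hlamT (Complex.conj_eq_iff_im.mp h)
    have h2' : 2 ≤ A.charpoly.roots.count lam :=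
      le_trans h2 (Multiset.count_le_of_le lam (Multiset.filter_le _ _))
    rw [hmult lam] at h2'
    -- extract two linearly independent vectors
    set V := φ.maxGenEigenspace lam with hVdef
    have : FiniteDimensional ℂ V := inferInstance
    obtain ⟨x, y, hxy⟩ : ∃ x y : V, LinearIndependent ℂ ![x, y] := by
      have hfr : 2 ≤ Module.finrank ℂ V := h2'
      let b := Module.finBasis ℂ V
      let n0 : Fin (Module.finrank ℂ V) := ⟨0, by omega⟩
      let n1 : Fin (Module.finrank ℂ V) := ⟨1, by omega⟩
      have hinj : Function.Injective (![n0, n1] : Fin 2 → Fin (Module.finrank ℂ V)) := by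
        intro s t hst
        fin_cases s <;> fin_cases t <;> simp_all [n0, n1]
      refine ⟨b n0, b n1, ?_⟩
      have hli := b.linearIndependent.comp (![n0, n1]) hinj
      have heq : (b ∘ ![n0, n1]) = ![b n0, b n1] := by
        funext s
        fin_cases s <;> rfl
      rwa [heq] at hli
    have hind : ∀ c d : ℂ, c • (x : Fin m ⊕ Unit → ℂ) + d • (y : Fin m ⊕ Unit → ℂ) = 0 →
        c = 0 ∧ d = 0 := by
      intro c d hcd
      have : c • x + d • y = 0 := by
        apply Subtype.ext
        simp only [Submodule.coe_add, SetLike.val_smul, ZeroMemClass.coe_zero]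
        exact hcd
      exact LinearIndependent.pair_iff.mp hxy c d this
    obtain ⟨kx, hkx⟩ := (hmem lam x).mp x.2
    obtain ⟨ky, hky⟩ := (hmem lam y).mp y.2
    have hx0 : (x : Fin m ⊕ Unit → ℂ) ≠ 0 := by
      intro h
      have : (x : V) = 0 := Subtype.ext h
      exact hxy.ne_zero 0 (by simpa [Matrix.cons_val_zero] using this)
    exact aux_contra A hAH lam lam hlam hlam hlam hlam x y kx ky hkx hky hx0 hind
  · -- at least three distinct non-real roots
    push_neg at hcase
    have hnodup : T.Nodup := Multiset.nodup_iff_count_le_one.mpr fun z => by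
      by_cases hz : z ∈ T
      · exact Nat.lt_succ_iff.mp (hcase z hz)
      · simp [Multiset.count_eq_zero_of_notMem hz]
    have hcardT : T.toFinset.card = T.card := Multiset.toFinset_card_of_nodup hnodup
    obtain ⟨α, hαS⟩ : ∃ α, α ∈ T.toFinset := by
      apply Finset.Nonempty.exists_mem
      rw [← Finset.card_pos, hcardT]; omega
    have hsd : 1 ≤ (T.toFinset \ {α, (starRingEnd ℂ) α}).card := by
      have h1 := Finset.card_le_card_sdiff_add_card (s := T.toFinset)
        (t := {α, (starRingEnd ℂ) α})
      have h2 : ({α, (starRingEnd ℂ) α} : Finset ℂ).card ≤ 2 :=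
        Finset.card_insert_le _ _ |>.trans (by simp)
      omega
    obtain ⟨β, hβ⟩ := Finset.card_pos.mp (by omega : 0 < (T.toFinset \ {α, (starRingEnd ℂ) α}).card)
    rw [Finset.mem_sdiff, Finset.mem_insert, Finset.mem_singleton] at hβ
    obtain ⟨hβS, hβne⟩ := hβ
    push_neg at hβne
    obtain ⟨hβα', hβcα⟩ := hβne
    have hαT : α ∈ T := Multiset.mem_toFinset.mp hαS
    have hβT : β ∈ T := Multiset.mem_toFinset.mp hβS
    have hα : (starRingEnd ℂ) α ≠ α := fun h => him α hαT (Complex.conj_eq_iff_im.mp h)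
    have hβ : (starRingEnd ℂ) β ≠ β := fun h => him β hβT (Complex.conj_eq_iff_im.mp h)
    have hαβ : (starRingEnd ℂ) α ≠ β := fun h => hβcα h.symm
    have hβα : (starRingEnd ℂ) β ≠ α := by
      intro h
      apply hβcα
      rw [← h, Complex.conj_conj]
    -- nonzero vectors in each generalized eigenspace
    have hget : ∀ γ, γ ∈ T → ∃ v : Fin m ⊕ Unit → ℂ, v ≠ 0 ∧ v ∈ φ.maxGenEigenspace γ := by
      intro γ hγ
      have h1 : 1 ≤ A.charpoly.roots.count γ :=
        Multiset.one_le_count_iff_mem.mpr (hTsub γ hγ)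
      rw [hmult γ] at h1
      have : φ.maxGenEigenspace γ ≠ ⊥ := by
        intro h
        rw [h] at h1
        simp at h1
      obtain ⟨v, hv, hv0⟩ := Submodule.exists_mem_ne_zero_of_ne_bot this
      exact ⟨v, hv0, hv⟩
    obtain ⟨x, hx0, hxV⟩ := hget α hαT
    obtain ⟨y, hy0, hyV⟩ := hget β hβT
    obtain ⟨kx, hkx⟩ := (hmem α x).mp hxV
    obtain ⟨ky, hky⟩ := (hmem β y).mp hyV
    have hdisj := Module.End.disjoint_genEigenspace φ (show α ≠ β from fun h => hβα' h.symm) ⊤ ⊤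
    have hind : ∀ c d : ℂ, c • x + d • y = 0 → c = 0 ∧ d = 0 := by
      intro c d hcd
      have h1 : c • x ∈ φ.maxGenEigenspace α := Submodule.smul_mem _ _ hxV
      have h2 : c • x ∈ φ.maxGenEigenspace β := by
        have : c • x = -(d • y) := by
          rw [eq_neg_iff_add_eq_zero]; exact hcd
        rw [this]
        exact Submodule.neg_mem _ (Submodule.smul_mem _ _ hyV)
      have hcx : c • x = 0 := by
        have := hdisj.le_bot (Submodule.mem_inf.mpr ⟨h1, h2⟩)
        simpa using this
      have hc : c = 0 := by
        rcases smul_eq_zero.mp hcx with h | h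
        · exact h
        · exact absurd h hx0
      refine ⟨hc, ?_⟩
      rw [hc, zero_smul, zero_add] at hcd
      rcases smul_eq_zero.mp hcd with h | h
      · exact h
      · exact absurd h hy0
    exact aux_contra A hAH α β hα hβ hαβ hβα x y kx ky hkx hky hx0 hind
end
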